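/- arXiv:1403.0385 — 10 statements merged into one kernel-verified Lean document; each statement's English description precedes it below -/
import Mathlib

section
/- A non-empty word u is a Lyndon word if and only if u is lexicographically greater than w for every factorization u = vw with v, w non-empty. -/
variable {X : Type*} [LinearOrder X]

/-- The lexicographical order of the paper: `u <_lex v` iff the words first differ with the
letter of `u` smaller, or `v` is a proper prefix of `u`. -/
def LexLt (u v : List X) : Prop :=
  (∃ (r s t : List X) (a b : X), a < b ∧ u = r ++ a :: s ∧ v = r ++ b :: t) ∨
    (v <+: u ∧ v ≠ u)

/-- A word `u` is Lyndon if it is nonempty and `u >_lex w ++ v` for every factorization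
`u = v ++ w` with `v, w` nonempty. -/
def IsLyndon (u : List X) : Prop :=
  u ≠ [] ∧ ∀ v w : List X, u = v ++ w → v ≠ [] → w ≠ [] → LexLt (w ++ v) u

private lemma lex_of_mid {r s t : List X} {a b : X} (hab : a < b) :
    List.Lex (· < ·) (r ++ a :: s) (r ++ b :: t) := by
  induction r with
  | nil => exact List.Lex.rel hab
  | cons x r ih => exact List.Lex.cons ih

private lemma lex_append_right : ∀ {v z : List X}, List.Lex (· < ·) v z → v.length = z.length →
    ∀ p q : List X, List.Lex (· < ·) (v ++ p) (z ++ q) := by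
  intro v z h
  induction h with
  | nil => intro h; simp at h
  | rel hab => intro _ p q; exact List.Lex.rel hab
  | @cons a l₁ l₂ _ ih =>
      intro hl p q
      simp only [List.length_cons, Nat.add_right_cancel_iff] at hl
      exact List.Lex.cons (ih hl p q)

private lemma lex_cancel_left : ∀ (w : List X) {v z : List X},
    List.Lex (· < ·) (w ++ v) (w ++ z) → List.Lex (· < ·) v z := by
  intro w
  induction w with
  | nil => intro v z h; exact h
  | cons x w ih =>
      intro v z h
      cases h with
      | rel hab => exact absurd hab (lt_irrefl x)
      | cons h => exact ih h

private lemma lex_asymm : ∀ {v z : List X},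
    List.Lex (· < ·) v z → List.Lex (· < ·) z v → False := by
  intro v z h
  induction h with
  | nil => intro h; cases h
  | @rel a l₁ b l₂ hab =>
      intro h
      cases h with
      | rel hba => exact absurd (hab.trans hba) (lt_irrefl a)
      | cons _ => exact absurd hab (lt_irrefl a)
  | @cons a l₁ l₂ _ ih =>
      intro h
      cases h with
      | rel hba => exact absurd hba (lt_irrefl a)
      | cons h => exact ih h

private lemma lexLt_to_lex {x y : List X} (h : LexLt x y) (hl : x.length = y.length) :
    List.Lex (· < ·) x y := by
  rcases h with ⟨r, s, t, a, b, hab, hx, hy⟩ | ⟨hp, hne⟩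
  · subst hx; subst hy; exact lex_of_mid hab
  · exact absurd (hp.eq_of_length hl.symm) hne

/-- A Lyndon word has no nonempty proper border. -/
private lemma no_border {u : List X} (hL : IsLyndon u) {w v z : List X}
    (h1 : u = v ++ w) (h2 : u = w ++ z) (hw : w ≠ []) (hv : v ≠ []) : False := by
  have hlen : v.length = z.length := by
    have := congrArg List.length (h1.symm.trans h2)
    simp only [List.length_append] at this
    omega
  have hz : z ≠ [] := by
    intro h; subst h
    exact hv (List.length_eq_zero_iff.mp (by simpa using hlen))
  have l1 : List.Lex (· < ·) (w ++ v) (w ++ z) := by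
    have := hL.2 v w h1 hv hw
    rw [h2] at this
    exact lexLt_to_lex this (by simp [hlen])
  have l2 : List.Lex (· < ·) (z ++ w) (v ++ w) := by
    have := hL.2 w z h2 hw hz
    rw [h1] at this
    exact lexLt_to_lex this (by simp [hlen])
  have hvz : List.Lex (· < ·) v z := lex_cancel_left w l1
  exact lex_asymm (lex_append_right hvz hlen w w) l2

theorem lyndon_iff_gt_proper_suffixes (u : List X) (hu : u ≠ []) :
    IsLyndon u ↔ ∀ v w : List X, u = v ++ w → v ≠ [] → w ≠ [] → LexLt w u := by
  constructor
  · intro hL v w huvw hv hw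
    have h := hL.2 v w huvw hv hw
    rcases h with ⟨r, s, t, a, b, hab, hwv, hut⟩ | ⟨hp, hne⟩
    · -- w ++ v = r ++ a :: s
      rcases List.append_eq_append_iff.mp hwv with ⟨k, hrk, hsv⟩ | ⟨k, hwk, hask⟩
      · -- r = w ++ k : w is a prefix of r hence of u; border contradiction
        have hpref : w <+: u := by
          rw [hut, hrk]
          exact ⟨k ++ b :: t, by simp⟩
        obtain ⟨z, hz⟩ := hpref
        exact absurd (no_border hL huvw hz.symm hw hv) (fun f => f)
      · -- w = r ++ k, a :: s = k ++ v
        cases k with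
        | nil =>
            -- w = r, prefix of u; border contradiction
            simp only [List.append_nil] at hwk
            have hpref : w <+: u := by
              rw [hut, hwk]; exact ⟨b :: t, rfl⟩
            obtain ⟨z, hz⟩ := hpref
            exact absurd (no_border hL huvw hz.symm hw hv) (fun f => f)
        | cons a' k' =>
            have ha : a' = a := by
              have := hask.symm
              simp only [List.cons_append, List.cons.injEq] at this
              exact this.1
            subst ha
            exact Or.inl ⟨r, k', t, a', b, hab, hwk, hut⟩
    · -- u <+: w ++ v with u ≠ w ++ v : impossible by lengths
      have hlen : u.length = (w ++ v).length := by
        rw [huvw]; simp; omega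
      exact absurd (hp.eq_of_length hlen) hne
  · intro h
    refine ⟨hu, fun v w huvw hv hw => ?_⟩
    have hw' := h v w huvw hv hw
    rcases hw' with ⟨r, s, t, a, b, hab, hws, hut⟩ | ⟨hp, hne⟩
    · exact Or.inl ⟨r, s ++ v, t, a, b, hab, by rw [hws]; simp, hut⟩
    · -- u <+: w, impossible: w shorter than u
      have h1 : u.length ≤ w.length := hp.length_le
      have h2 : w.length < u.length := by
        rw [huvw]; simp
        exact List.length_pos_iff.mpr hv
      omega
end

section
/- A non-empty word u is a Lyndon word if and only if v >_lex w for every factorization u = vw with v, w non-empty. -/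
set_option linter.unusedSectionVars false


variable {X : Type*} [LinearOrder X]

private instance gtIrrefl : IsIrrefl X (fun a b : X => b < a) := ⟨fun a h => lt_irrefl a h⟩
private instance gtAsymm : IsAsymm X (fun a b : X => b < a) := ⟨fun _ _ h h' => absurd h' (not_lt_of_gt h)⟩
private instance gtTricho : IsTrichotomous X (fun a b : X => b < a) :=
  ⟨fun a b => by rcases lt_trichotomy a b with h | h | h
                 exacts [fun _ h2 => absurd h h2, fun _ _ => h, fun h1 _ => absurd h h1]⟩

/-- Bridge between `LexLt` and Mathlib's `List.Lex`. -/
theorem lexLt_iff_lex {u v : List X} :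
    LexLt u v ↔ List.Lex (fun a b : X => b < a) v u := by
  constructor
  · rintro (⟨r, s, t, a, b, hab, rfl, rfl⟩ | ⟨⟨c, rfl⟩, hne⟩)
    · exact List.Lex.append_left (fun a b : X => b < a) (List.Lex.rel hab) r
    · have hc : c ≠ [] := by rintro rfl; simp at hne
      obtain ⟨d, l, rfl⟩ := List.exists_cons_of_ne_nil hc
      have : List.Lex (fun a b : X => b < a) ([] : List X) (d :: l) := List.Lex.nil
      simpa using List.Lex.append_left _ this v
  · intro h
    induction h with
    | nil => exact Or.inr ⟨⟨_, rfl⟩, by simp⟩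
    | @cons a l₁ l₂ h ih =>
      rcases ih with ⟨r, s, t, x, y, hxy, hu, hv⟩ | ⟨⟨c, hc⟩, hne⟩
      · exact Or.inl ⟨a :: r, s, t, x, y, hxy, by simp [hu], by simp [hv]⟩
      · exact Or.inr ⟨⟨c, by simp [← hc]⟩, by simpa using hne⟩
    | @rel a l₁ b l₂ h => exact Or.inl ⟨[], l₂, l₁, b, a, h, rfl, rfl⟩

theorem lexLt_asymm {a b : List X} (h₁ : LexLt a b) (h₂ : LexLt b a) : False :=
  Std.Asymm.asymm _ _ (lexLt_iff_lex.1 h₂) (lexLt_iff_lex.1 h₁)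

theorem lexLt_irrefl {a : List X} (h : LexLt a a) : False := lexLt_asymm h h

theorem lexLt_trichotomy (a b : List X) : LexLt a b ∨ a = b ∨ LexLt b a := by
  rcases trichotomous_of (List.Lex (fun a b : X => b < a)) b a with h | h | h
  · exact Or.inl (lexLt_iff_lex.2 h)
  · exact Or.inr (Or.inl h.symm)
  · exact Or.inr (Or.inr (lexLt_iff_lex.2 h))

theorem lexLt_append_left_iff (x : List X) {a b : List X} :
    LexLt (x ++ a) (x ++ b) ↔ LexLt a b := by
  rw [lexLt_iff_lex, lexLt_iff_lex]
  induction x with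
  | nil => simp
  | cons d l ih => simpa [List.lex_cons_iff] using ih

/-- If `r ++ b :: t = v ++ x` with `r` shorter than `v`, then `r ++ [b]` is a prefix of `v`. -/

theorem prefix_extract {r v t x : List X} {b : X}
    (h : r ++ b :: t = v ++ x) (hlt : r.length < v.length) :
    ∃ t', v = r ++ b :: t' := by
  have hrv : r <+: v := by
    refine List.prefix_of_prefix_length_le ?_ ⟨x, rfl⟩ hlt.le
    exact ⟨b :: t, h⟩
  obtain ⟨d, rfl⟩ := hrv
  have hd : d ≠ [] := by
    rintro rfl
    simp at hlt
  obtain ⟨e, d', rfl⟩ := List.exists_cons_of_ne_nil hd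
  have : b :: t = e :: (d' ++ x) := by simpa using h
  obtain ⟨rfl, -⟩ : b = e ∧ t = d' ++ x := by simpa using this
  exact ⟨d', rfl⟩

/-- Key absorption lemma: if `m <_lex v ++ v ++ m` then `m <_lex v ++ m`. -/
theorem lexLt_absorb : ∀ (n : ℕ) (m v : List X), m.length ≤ n →
    LexLt m (v ++ v ++ m) → LexLt m (v ++ m) := by
  intro n
  induction n with
  | zero =>
    intro m v hm h
    have : m = [] := List.length_eq_zero_iff.1 (Nat.le_zero.1 hm)
    subst this
    rcases h with ⟨r, s, t, a, b, hab, hm, hv⟩ | ⟨⟨c, hc⟩, hne⟩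
    · exact absurd hm (by simp)
    · have : v = [] := by
        have := congrArg List.length hc
        simp at this
        tauto
      subst this
      simp at hne
  | succ n ih =>
    intro m v hm h
    rcases eq_or_ne v [] with rfl | hv
    · simpa using h
    have hv1 : 1 ≤ v.length := by
      rcases List.exists_cons_of_ne_nil hv with ⟨e, l, rfl⟩; simp
    rcases h with ⟨r, s, t, a, b, hab, hmr, hvr⟩ | ⟨⟨c, hc⟩, hne⟩
    · -- diff case
      have h0 : LexLt m (v ++ v ++ m) := Or.inl ⟨r, s, t, a, b, hab, hmr, hvr⟩
      rcases lt_or_ge r.length v.length with hlt | hle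
      · have hvr' : r ++ b :: t = v ++ (v ++ m) := by simpa using hvr.symm
        obtain ⟨t', hvt⟩ := prefix_extract hvr' hlt
        refine Or.inl ⟨r, s, t' ++ m, a, b, hab, hmr, ?_⟩
        rw [hvt]; simp
      · -- v is a prefix of r, hence of m
        have hvpr : v <+: r := by
          refine List.prefix_of_prefix_length_le ?_ ⟨b :: t, hvr.symm⟩ hle
          exact ⟨v ++ m, by simp⟩
        obtain ⟨r₀, rfl⟩ := hvpr
        -- m = v ++ m₁ with m₁ = r₀ ++ a :: s
        have hm' : m = v ++ (r₀ ++ a :: s) := by simpa using hmr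
        set m₁ := r₀ ++ a :: s with hm₁
        have hlen : m₁.length ≤ n := by
          have := congrArg List.length hm'
          simp only [List.length_append] at this ⊢
          simp only [hm₁, List.length_append, List.length_cons] at this ⊢
          omega
        have h1 : LexLt m₁ (v ++ v ++ m₁) := by
          have h0' : LexLt (v ++ m₁) (v ++ (v ++ v ++ m₁)) := by
            have e1 : v ++ m₁ = m := hm'.symm
            have e2 : v ++ (v ++ v ++ m₁) = v ++ v ++ m := by simp [hm']
            rw [e1, e2]; exact h0
          exact (lexLt_append_left_iff v).1 h0'
        have h2 : LexLt m₁ (v ++ m₁) := ih m₁ v hlen h1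
        have h4 : LexLt (v ++ m₁) (v ++ (v ++ m₁)) := (lexLt_append_left_iff v).2 h2
        rw [hm']
        simpa using h4
    · -- prefix case: impossible since v ≠ []
      exfalso
      have := congrArg List.length hc
      simp at this
      omega

theorem lyndon_iff_prefix_gt_suffix (u : List X) (hu : u ≠ []) :
    IsLyndon u ↔ ∀ v w : List X, u = v ++ w → v ≠ [] → w ≠ [] → LexLt w v := by
  constructor
  · -- Lyndon → prefix-suffix condition
    rintro ⟨-, hL⟩ v w hsplit hv hw
    rcases lexLt_trichotomy w v with h | rfl | h
    · exact h
    · exact absurd (hsplit ▸ hL w w hsplit hv hw) lexLt_irrefl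
    · exfalso
      rcases h with ⟨r, s, t, a, b, hab, hvr, hwr⟩ | ⟨⟨c, hc⟩, hne⟩
      · -- v has a smaller letter at the first difference: u <_lex w ++ v, contradiction
        have h1 : LexLt (v ++ w) (w ++ v) :=
          Or.inl ⟨r, s ++ w, t ++ v, a, b, hab, by simp [hvr], by simp [hwr]⟩
        exact lexLt_asymm (hsplit ▸ hL v w hsplit hv hw) h1
      · -- w is a proper prefix of v : v = w ++ c, c ≠ []
        have hc' : c ≠ [] := by rintro rfl; exact hne (by simpa using hc)
        subst hc
        have hu1 : u = w ++ (c ++ w) := by simp [hsplit]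
        have H1 : LexLt ((c ++ w) ++ w) u :=
          hL w (c ++ w) hu1 hw (by simp [hc'])
        have H2 : LexLt (w ++ (w ++ c)) u := hL (w ++ c) w hsplit hv hw
        have H2' : LexLt (w ++ c) (c ++ w) := by
          rw [hu1] at H2
          exact (lexLt_append_left_iff w).1 H2
        rcases H2' with ⟨r, s, t, a, b, hab, hwc, hcw⟩ | ⟨⟨d, hd⟩, hne'⟩
        · have h3 : LexLt ((w ++ c) ++ w) ((c ++ w) ++ w) :=
            Or.inl ⟨r, s ++ w, t ++ w, a, b, hab, by simp [hwc], by simp [hcw]⟩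
          have h4 : u = (w ++ c) ++ w := hsplit
          exact lexLt_asymm (h4 ▸ H1) h3
        · -- (c ++ w) is a prefix of (w ++ c) of the same length, so they are equal
          have : c ++ w = w ++ c := by
            refine List.IsPrefix.eq_of_length ⟨d, hd⟩ ?_
            simp [Nat.add_comm]
          exact hne' this
  · -- prefix-suffix condition → Lyndon
    intro hP
    refine ⟨hu, ?_⟩
    -- First show every proper suffix w satisfies LexLt w u, by strong induction on |w|
    have S : ∀ (n : ℕ) (v w : List X), w.length ≤ n → u = v ++ w → v ≠ [] → w ≠ [] →
        LexLt w u := by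
      intro n
      induction n with
      | zero =>
        intro v w hn hsplit hv hw
        exact absurd (List.length_eq_zero_iff.1 (Nat.le_zero.1 hn)) hw
      | succ n ih =>
        intro v w hn hsplit hv hw
        rcases hP v w hsplit hv hw with ⟨r, s, t, a, b, hab, hwr, hvr⟩ | ⟨⟨m, hm⟩, hne⟩
        · exact Or.inl ⟨r, s, t ++ w, a, b, hab, hwr, by simp [hsplit, hvr]⟩
        · -- w = v ++ m
          have hm' : m ≠ [] := by rintro rfl; exact hne (by simpa using hm)
          have hu2 : u = (v ++ v) ++ m := by simp [hsplit, ← hm]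
          have hlen : m.length ≤ n := by
            have := congrArg List.length hm
            have hv1 : 1 ≤ v.length := by
              rcases List.exists_cons_of_ne_nil hv with ⟨e, l, rfl⟩; simp
            simp at this
            omega
          have h1 : LexLt m u := ih (v ++ v) m hlen hu2 (by simp [hv]) hm'
          have h2 : LexLt m (v ++ v ++ m) := by rwa [hu2] at h1
          have h3 : LexLt m (v ++ m) := lexLt_absorb m.length m v le_rfl h2
          have h4 : LexLt (v ++ m) (v ++ (v ++ m)) := (lexLt_append_left_iff v).2 h3
          rw [hsplit, ← hm]
          simpa using h4
    intro v w hsplit hv hw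
    have hS : LexLt w u := S w.length v w le_rfl hsplit hv hw
    rcases hS with ⟨r, s, t, a, b, hab, hwr, hur⟩ | ⟨⟨c, hc⟩, hne⟩
    · exact Or.inl ⟨r, s ++ v, t, a, b, hab, by simp [hwr], hur⟩
    · exfalso
      have := congrArg List.length hc
      have hv1 : 1 ≤ v.length := by
        rcases List.exists_cons_of_ne_nil hv with ⟨e, l, rfl⟩; simp
      simp [hsplit] at this
      omega
end

section
/- No non-empty word is simultaneously a proper prefix and a proper suffix of a Lyndon word. -/
variable {X : Type*} [LinearOrder X]

/-- The strict "first difference" relation. -/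
def DLt (x y : List X) : Prop :=
  ∃ (r s t : List X) (a b : X), a < b ∧ x = r ++ a :: s ∧ y = r ++ b :: t

lemma prefix_eq_of_length_eq {l p₁ p₂ : List X} (h₁ : p₁ <+: l) (h₂ : p₂ <+: l)
    (h : p₁.length = p₂.length) : p₁ = p₂ :=
  (List.prefix_of_prefix_length_le h₁ h₂ h.le).eq_of_length h

lemma DLt_aux {x y r₁ r₂ s₁ t₁ s₂ t₂ : List X} {a₁ b₁ a₂ b₂ : X}
    (hab₁ : a₁ < b₁) (hab₂ : a₂ < b₂)
    (hx₁ : x = r₁ ++ a₁ :: s₁) (hy₁ : y = r₁ ++ b₁ :: t₁)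
    (hy₂ : y = r₂ ++ a₂ :: s₂) (hx₂ : x = r₂ ++ b₂ :: t₂)
    (hle : r₁.length ≤ r₂.length) : False := by
  have hr : r₁ <+: r₂ :=
    List.prefix_of_prefix_length_le ⟨a₁ :: s₁, hx₁.symm⟩ ⟨b₂ :: t₂, hx₂.symm⟩ hle
  obtain ⟨q, rfl⟩ := hr
  cases q with
  | nil =>
    rw [List.append_nil] at hy₂ hx₂
    have e₁ : a₁ = b₂ := by
      have := hx₁.symm.trans hx₂
      exact (List.cons.injEq .. ▸ (List.append_cancel_left this)).1
    have e₂ : b₁ = a₂ := by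
      have := hy₁.symm.trans hy₂
      exact (List.cons.injEq .. ▸ (List.append_cancel_left this)).1
    exact absurd (hab₁.trans_le (e₂ ▸ hab₂.le)) (by simp [e₁])
  | cons c z =>
    have e₁ : a₁ = c := by
      have : r₁ ++ a₁ :: s₁ = r₁ ++ c :: (z ++ b₂ :: t₂) := by
        rw [← hx₁, hx₂]; simp
      exact (List.cons.injEq .. ▸ (List.append_cancel_left this)).1
    have e₂ : b₁ = c := by
      have : r₁ ++ b₁ :: t₁ = r₁ ++ c :: (z ++ a₂ :: s₂) := by
        rw [← hy₁, hy₂]; simp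
      exact (List.cons.injEq .. ▸ (List.append_cancel_left this)).1
    rw [e₁, e₂] at hab₁; exact lt_irrefl c hab₁

lemma DLt_asymm {x y : List X} (h₁ : DLt x y) (h₂ : DLt y x) : False := by
  obtain ⟨r₁, s₁, t₁, a₁, b₁, hab₁, hx₁, hy₁⟩ := h₁
  obtain ⟨r₂, s₂, t₂, a₂, b₂, hab₂, hy₂, hx₂⟩ := h₂
  rcases le_total r₁.length r₂.length with h | h
  · exact DLt_aux hab₁ hab₂ hx₁ hy₁ hy₂ hx₂ h
  · exact DLt_aux hab₂ hab₁ hy₂ hx₂ hx₁ hy₁ h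

theorem lyndon_no_border (u : List X) (hu : IsLyndon u) :
    ¬∃ v : List X, v ≠ [] ∧ v ≠ u ∧ v <+: u ∧ v <:+ u := by
  rintro ⟨v, hv0, hvu, ⟨w, hw⟩, ⟨w', hw'⟩⟩
  -- hw : v ++ w = u, hw' : w' ++ v = u
  have hwne : w ≠ [] := by rintro rfl; rw [List.append_nil] at hw; exact hvu hw
  have hw'ne : w' ≠ [] := by rintro rfl; rw [List.nil_append] at hw'; exact hvu hw'
  obtain ⟨-, hL⟩ := hu
  have h1 := hL w' v hw'.symm hw'ne hv0   -- LexLt (v ++ w') u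
  have h2 := hL v w hw.symm hv0 hwne      -- LexLt (w ++ v) u
  have hlen1 : (v ++ w').length = u.length := by
    rw [← hw']; simp [Nat.add_comm]
  have hlen2 : (w ++ v).length = u.length := by
    rw [← hw]; simp [Nat.add_comm]
  -- dispose of the prefix cases of LexLt
  rcases h1 with h1 | ⟨hp, hne⟩
  swap
  · exact hne (hp.eq_of_length hlen1.symm)
  rcases h2 with h2 | ⟨hp, hne⟩
  swap
  · exact hne (hp.eq_of_length hlen2.symm)
  -- first rotation : DLt u w
  obtain ⟨r, s, t, a, b, hab, he1, he2⟩ := h1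
  have hvr : v <+: r := by
    have hru : r ++ [a] <+: v ++ w' := ⟨s, by rw [he1]; simp⟩
    have hru' : r ++ [b] <+: u := ⟨t, by rw [he2]; simp⟩
    rcases le_or_gt v.length r.length with hle | hlt
    · exact List.prefix_of_prefix_length_le ⟨w', rfl⟩ ⟨a :: s, he1.symm⟩ hle
      -- v <+: v++w' trivially; but this branch shape is wrong; fixed below
    · exfalso
      have hav : r ++ [a] <+: v :=
        List.prefix_of_prefix_length_le hru ⟨w', rfl⟩ (by simp; omega)
      have hbv : r ++ [b] <+: v :=
        List.prefix_of_prefix_length_le hru' ⟨w, hw⟩ (by simp; omega)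
      have := prefix_eq_of_length_eq hav hbv (by simp)
      have : a = b := by simpa using List.append_cancel_left this
      exact absurd (this ▸ hab) (lt_irrefl b)
  obtain ⟨r', rfl⟩ := hvr
  have hw'eq : w' = r' ++ a :: s := by
    apply List.append_cancel_left (as := v)
    rw [he1]; simp
  have hDuw : DLt u w := by
    refine ⟨r', s ++ v, t, a, b, hab, ?_, ?_⟩
    · rw [← hw', hw'eq]; simp
    · apply List.append_cancel_left (as := v)
      rw [hw, he2]; simp
  -- second rotation : DLt w u
  obtain ⟨r₂, s₂, t₂, a₂, b₂, hab₂, he3, he4⟩ := h2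
  have hr₂w : r₂.length < w.length := by
    by_contra hge
    push_neg at hge
    have hwr : w <+: r₂ :=
      List.prefix_of_prefix_length_le ⟨v, rfl⟩ ⟨a₂ :: s₂, he3.symm⟩ hge
    obtain ⟨q, rfl⟩ := hwr
    have hu2 : u = w ++ (q ++ b₂ :: t₂) := by rw [he4]; simp
    have hlw : w.length = w'.length := by
      have := congrArg List.length hw
      have := congrArg List.length hw'
      simp at *; omega
    obtain ⟨hww', hveq⟩ := List.append_inj (hw'.trans hu2) hlw.symm
    have hveq' : v = q ++ a₂ :: s₂ := by
      have : w ++ v = w ++ (q ++ a₂ :: s₂) := by rw [he3]; simp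
      exact List.append_cancel_left this
    have : a₂ = b₂ := by
      have h5 : q ++ a₂ :: s₂ = q ++ b₂ :: t₂ := hveq'.symm.trans hveq
      have := List.append_cancel_left h5
      have := List.cons.injEq .. ▸ this
      exact this.1
    exact absurd (this ▸ hab₂) (lt_irrefl b₂)
  have hr₂ : r₂ <+: w :=
    List.prefix_of_prefix_length_le ⟨a₂ :: s₂, he3.symm⟩ ⟨v, rfl⟩ hr₂w.le
  obtain ⟨q₂, rfl⟩ := hr₂
  cases q₂ with
  | nil => simp at hr₂w
  | cons c z =>
    have hc : a₂ = c := by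
      have : r₂ ++ a₂ :: s₂ = r₂ ++ c :: (z ++ v) := by rw [← he3]; simp
      exact (List.cons.injEq .. ▸ (List.append_cancel_left this)).1
    have hDwu : DLt (r₂ ++ c :: z) u := ⟨r₂, z, t₂, a₂, b₂, hab₂, by rw [hc], he4⟩
    exact DLt_asymm hDuw hDwu
end

section
/- Let u = w1·w2 and v = w2·w3 be Lyndon words with u >_lex v. Then the concatenation w = w1·w2·w3 is a Lyndon word. -/
variable {X : Type*} [LinearOrder X]

namespace LyndonAux

instance : IsStrictTotalOrder X (· > · : X → X → Prop) := ⟨⟩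

/-- `u` is lexicographically greater than `v` because of a letter difference. -/
def RelDiff (u v : List X) : Prop :=
  ∃ (c s t : List X) (a b : X), b < a ∧ u = c ++ a :: s ∧ v = c ++ b :: t

theorem RelDiff.lex {u v : List X} (h : RelDiff u v) : List.Lex (· > ·) u v := by
  obtain ⟨c, s, t, a, b, hab, rfl, rfl⟩ := h
  induction c with
  | nil => exact List.Lex.rel hab
  | cons x c ih => exact List.Lex.cons ih

theorem RelDiff.append_left_arg {u v : List X} (h : RelDiff u v) (x : List X) :
    RelDiff (u ++ x) v := by
  obtain ⟨c, s, t, a, b, hab, rfl, rfl⟩ := h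
  exact ⟨c, s ++ x, t, a, b, hab, by simp, rfl⟩

theorem RelDiff.append_right_arg {u v : List X} (h : RelDiff u v) (y : List X) :
    RelDiff u (v ++ y) := by
  obtain ⟨c, s, t, a, b, hab, rfl, rfl⟩ := h
  exact ⟨c, s, t ++ y, a, b, hab, rfl, by simp⟩

theorem RelDiff.prepend {u v : List X} (h : RelDiff u v) (z : List X) :
    RelDiff (z ++ u) (z ++ v) := by
  obtain ⟨c, s, t, a, b, hab, rfl, rfl⟩ := h
  exact ⟨z ++ c, s, t, a, b, hab, by simp, by simp⟩

theorem prefix_lex {u v : List X} (h : u <+: v) (hne : u ≠ v) : List.Lex (· > ·) u v := by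
  obtain ⟨t, rfl⟩ := h
  induction u with
  | nil =>
    cases t with
    | nil => simp at hne
    | cons b t => exact List.Lex.nil
  | cons a u ih => exact List.Lex.cons (ih (by simpa using hne))

theorem lex_cases {u v : List X} (h : List.Lex (· > ·) u v) :
    RelDiff u v ∨ (u <+: v ∧ u ≠ v) := by
  induction h with
  | nil => exact Or.inr ⟨List.nil_prefix, by simp⟩
  | @rel a l₁ b l₂ hab => exact Or.inl ⟨[], l₁, l₂, a, b, hab, rfl, rfl⟩
  | @cons a l₁ l₂ h ih =>
    rcases ih with ⟨c, s, t, x, y, hxy, rfl, rfl⟩ | ⟨hpre, hne⟩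
    · exact Or.inl ⟨a :: c, s, t, x, y, hxy, rfl, rfl⟩
    · exact Or.inr ⟨List.cons_prefix_cons.2 ⟨rfl, hpre⟩, by simpa using hne⟩

theorem reldiff_of_lex_length {u v : List X} (h : List.Lex (· > ·) u v)
    (hlen : v.length ≤ u.length) : RelDiff u v := by
  rcases lex_cases h with hrd | ⟨hpre, hne⟩
  · exact hrd
  · exact absurd (hpre.eq_of_length (le_antisymm hpre.length_le hlen)) hne

theorem not_lex_of_prefix {u v : List X} (h : List.Lex (· > ·) u v) (hpre : v <+: u) :
    False := by
  rcases lex_cases h with ⟨c, s, t, a, b, hab, rfl, rfl⟩ | ⟨hpre', hne⟩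
  · have : b :: t <+: a :: s := by
      obtain ⟨e, he⟩ := hpre
      rw [List.append_assoc] at he
      exact ⟨e, List.append_cancel_left he⟩
    exact absurd (List.cons_prefix_cons.1 this).1 (ne_of_lt hab)
  · exact hne (hpre'.eq_of_length (le_antisymm hpre'.length_le hpre.length_le))

theorem lex_of_append_left {z u v : List X} (h : List.Lex (· > ·) (z ++ u) (z ++ v)) :
    List.Lex (· > ·) u v := by
  induction z with
  | nil => exact h
  | cons x z ih => exact ih (List.lex_cons_iff.1 h)

omit [LinearOrder X] in
theorem suffix_of_suffix_length_le {l₁ l₂ l₃ : List X} (h1 : l₁ <:+ l₃) (h2 : l₂ <:+ l₃)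
    (h : l₁.length ≤ l₂.length) : l₁ <:+ l₂ := by
  rw [← List.reverse_prefix] at h1 h2 ⊢
  exact List.prefix_of_prefix_length_le h1 h2 (by simpa using h)

theorem lexLt_iff (u v : List X) : LexLt u v ↔ List.Lex (· > ·) v u := by
  constructor
  · rintro (⟨r, s, t, a, b, hab, rfl, rfl⟩ | ⟨hpre, hne⟩)
    · exact RelDiff.lex ⟨r, t, s, b, a, hab, rfl, rfl⟩
    · exact prefix_lex hpre hne
  · intro h
    rcases lex_cases h with ⟨c, s, t, a, b, hab, hv, hu⟩ | ⟨hpre, hne⟩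
    · exact Or.inl ⟨c, t, s, b, a, hab, hu, hv⟩
    · exact Or.inr ⟨hpre, hne⟩

/-- Key lemma: a Lyndon word is bigger (by a letter difference) than each of its
proper nonempty suffixes. -/
theorem lyndon_suffix {u : List X}
    (hrot : ∀ p q : List X, u = p ++ q → p ≠ [] → q ≠ [] → List.Lex (· > ·) u (q ++ p))
    {s : List X} (hs : s <:+ u) (hne : s ≠ []) (hlen : s.length < u.length) :
    RelDiff u s := by
  obtain ⟨p, rfl⟩ := hs
  have hp : p ≠ [] := by rintro rfl; simp at hlen
  have hrot1 : List.Lex (· > ·) (p ++ s) (s ++ p) := hrot p s rfl hp hne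
  rcases lex_cases hrot1 with ⟨c, s', t', a, b, hab, hu, hsp⟩ | ⟨hpre, hneq⟩
  · rcases lt_or_ge c.length s.length with hcs | hcs
    · -- the difference happens inside `s`
      have hcpre : c <+: s :=
        List.prefix_of_prefix_length_le ⟨b :: t', hsp.symm⟩ (List.prefix_append s p) hcs.le
      obtain ⟨d, rfl⟩ := hcpre
      have hd : d ≠ [] := by rintro rfl; simp at hcs
      have hdp : d ++ p = b :: t' := by
        rw [List.append_assoc] at hsp
        exact List.append_cancel_left hsp
      obtain ⟨d', rfl⟩ : ∃ d', d = b :: d' := by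
        cases d with
        | nil => exact absurd rfl hd
        | cons x d' =>
          rw [List.cons_append] at hdp
          injection hdp with hx _
          exact ⟨d', by rw [hx]⟩
      exact ⟨c, s', d', a, b, hab, hu, rfl⟩
    · -- `s` is a prefix of `u`: unbordered argument
      have hspre : s <+: c :=
        List.prefix_of_prefix_length_le (List.prefix_append s p) ⟨b :: t', hsp.symm⟩ hcs
      have hsu : s <+: p ++ s := hspre.trans ⟨a :: s', hu.symm⟩
      obtain ⟨e, he⟩ := hsu
      have he' : p ++ s = s ++ e := he.symm
      have hel : e ≠ [] := by
        rintro rfl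
        have := congrArg List.length he
        simp at this
        exact hp this
      have hrot2 : List.Lex (· > ·) (p ++ s) (e ++ s) := hrot s e he' hne hel
      rw [he'] at hrot1
      have hlex_ep : List.Lex (· > ·) e p := lex_of_append_left hrot1
      have hlep : p.length ≤ e.length := by
        have := congrArg List.length he'
        simp at this
        omega
      have hrd : RelDiff (e ++ s) (p ++ s) :=
        ((reldiff_of_lex_length hlex_ep hlep).append_left_arg s).append_right_arg s
      exact absurd hrd.lex (asymm_of (List.Lex (· > ·)) hrot2)
  · exact absurd (hpre.eq_of_length (by simp [Nat.add_comm])) hneq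

end LyndonAux

open LyndonAux in
theorem lyndon_concat (w1 w2 w3 : List X) (h1 : IsLyndon (w1 ++ w2))
    (h2 : IsLyndon (w2 ++ w3)) (hlt : LexLt (w2 ++ w3) (w1 ++ w2)) :
    IsLyndon (w1 ++ w2 ++ w3) := by
  rcases eq_or_ne w1 [] with rfl | hw1
  · simpa using h2
  have h1rot : ∀ p q : List X, w1 ++ w2 = p ++ q → p ≠ [] → q ≠ [] →
      List.Lex (· > ·) (w1 ++ w2) (q ++ p) :=
    fun p q h hp hq => (lexLt_iff _ _).1 (h1.2 p q h hp hq)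
  have h2rot : ∀ p q : List X, w2 ++ w3 = p ++ q → p ≠ [] → q ≠ [] →
      List.Lex (· > ·) (w2 ++ w3) (q ++ p) :=
    fun p q h hp hq => (lexLt_iff _ _).1 (h2.2 p q h hp hq)
  have hAB : List.Lex (· > ·) (w1 ++ w2) (w2 ++ w3) := (lexLt_iff _ _).1 hlt
  have hassoc : w1 ++ w2 ++ w3 = w1 ++ (w2 ++ w3) := List.append_assoc _ _ _
  -- Step 1: the whole word is bigger than `w2 ++ w3` by a letter difference
  have hwB : RelDiff (w1 ++ w2 ++ w3) (w2 ++ w3) := by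
    rcases trichotomous_of (List.Lex (· > ·)) w1 (w2 ++ w3) with h | h | h
    · rcases lex_cases h with hrd | ⟨hpre, hneq⟩
      · rw [hassoc]; exact hrd.append_left_arg _
      · obtain ⟨B₂, hB2⟩ := hpre
        have hB2ne : B₂ ≠ [] := by
          rintro rfl; rw [List.append_nil] at hB2; exact hneq hB2
        have hrd : RelDiff (w2 ++ w3) B₂ := by
          refine lyndon_suffix h2rot ⟨w1, hB2⟩ hB2ne ?_
          rw [← hB2]
          have : w1.length ≠ 0 := fun h => hw1 (List.length_eq_zero_iff.1 h)
          simp only [List.length_append]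
          omega
        have hfin := hrd.prepend w1
        rw [hB2] at hfin
        rw [hassoc]
        exact hfin
    · exact (not_lex_of_prefix hAB ⟨w2, by rw [h]⟩).elim
    · rcases lex_cases h with hrd | ⟨hpre, _⟩
      · exact absurd (hrd.append_right_arg w2).lex (asymm_of (List.Lex (· > ·)) hAB)
      · exact absurd hAB (fun hl => not_lex_of_prefix hl (hpre.trans ⟨w2, rfl⟩))
  refine ⟨?_, ?_⟩
  · intro h
    rw [List.append_eq_nil_iff, List.append_eq_nil_iff] at h
    exact hw1 h.1.1
  intro p q hsplit hp hq
  rw [lexLt_iff]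
  have hlen_q : q.length < (w1 ++ w2 ++ w3).length := by
    have := congrArg List.length hsplit
    simp only [List.length_append] at this ⊢
    have : p.length ≠ 0 := fun h => hp (List.length_eq_zero_iff.1 h)
    omega
  suffices hrd : RelDiff (w1 ++ w2 ++ w3) q by exact (hrd.append_right_arg p).lex
  have hqsuf : q <:+ w1 ++ w2 ++ w3 := ⟨p, hsplit.symm⟩
  have hBsuf : w2 ++ w3 <:+ w1 ++ w2 ++ w3 := ⟨w1, hassoc.symm⟩
  rcases lt_trichotomy q.length (w2 ++ w3).length with hl | hl | hl
  · -- q is a proper suffix of w2 ++ w3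
    have hqB : q <:+ w2 ++ w3 := suffix_of_suffix_length_le hqsuf hBsuf hl.le
    have hrdBq : RelDiff (w2 ++ w3) q := lyndon_suffix h2rot hqB hq hl
    exact reldiff_of_lex_length (List.lex_trans (fun h1 h2 => gt_trans h1 h2) hwB.lex hrdBq.lex) hlen_q.le
  · -- q = w2 ++ w3
    have : q = w2 ++ w3 :=
      (suffix_of_suffix_length_le hqsuf hBsuf hl.le).eq_of_length hl
    rw [this]; exact hwB
  · -- q overlaps w1
    have hlen_split := congrArg List.length hsplit
    simp only [List.length_append] at hlen_split hl
    have hplen : p.length < w1.length := by omega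
    have hppos : p.length ≠ 0 := fun h => hp (List.length_eq_zero_iff.1 h)
    have hple : p.length ≤ (w1 ++ w2).length := by simp only [List.length_append]; omega
    have hdrop : q = (w1 ++ w2).drop p.length ++ w3 := by
      have hq1 : q = (w1 ++ w2 ++ w3).drop p.length := by
        rw [hsplit]; exact (List.drop_left (l₁ := p) (l₂ := q)).symm
      rw [hq1, List.drop_append_of_le_length hple]
    have hp' : (w1 ++ w2).drop p.length ≠ [] := by
      intro h
      have := congrArg List.length h
      simp only [List.length_drop, List.length_append, List.length_nil] at this
      omega
    have hrdA : RelDiff (w1 ++ w2) ((w1 ++ w2).drop p.length) := by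
      refine lyndon_suffix h1rot (List.drop_suffix _ _) hp' ?_
      simp only [List.length_drop, List.length_append]
      omega
    rw [hdrop]
    exact (hrdA.append_left_arg w3).append_right_arg w3
end

section
/- If u is a Lyndon word of length at least 2 and u = u'·u'' where u'' is the longest proper suffix of u that is a Lyndon word, then u' is a Lyndon word. -/
variable {X : Type*} [LinearOrder X]

/-- `(u', u'')` is the Shirshov factorization of `u`: `u = u' ++ u''` where `u''` is the
longest proper Lyndon suffix of `u`. -/
def IsShirshov (u u1 u2 : List X) : Prop :=
  u = u1 ++ u2 ∧ u1 ≠ [] ∧ u2 ≠ [] ∧ IsLyndon u2 ∧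
    ∀ s : List X, s <:+ u → s ≠ u → IsLyndon s → s.length ≤ u2.length

def FD (a b : List X) : Prop :=
  ∃ (i : ℕ) (x y : X), a.take i = b.take i ∧ a[i]? = some x ∧ b[i]? = some y ∧ x < y

theorem fd_iff_rst {a b : List X} :
    FD a b ↔ ∃ (r s t : List X) (x y : X), x < y ∧ a = r ++ x :: s ∧ b = r ++ y :: t := by
  constructor
  · rintro ⟨i, x, y, hT, hx, hy, hxy⟩
    obtain ⟨hia, hxa⟩ := List.getElem?_eq_some_iff.mp hx
    obtain ⟨hib, hyb⟩ := List.getElem?_eq_some_iff.mp hy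
    refine ⟨a.take i, a.drop (i+1), b.drop (i+1), x, y, hxy, ?_, ?_⟩
    · conv_lhs => rw [← List.take_append_drop i a, List.drop_eq_getElem_cons hia, hxa]
    · conv_lhs => rw [← List.take_append_drop i b, List.drop_eq_getElem_cons hib, hyb]
      rw [hT]
  · rintro ⟨r, s, t, x, y, hxy, rfl, rfl⟩
    refine ⟨r.length, x, y, ?_, ?_, ?_, hxy⟩
    · rw [List.take_left, List.take_left]
    · rw [List.getElem?_append_right le_rfl]; simp
    · rw [List.getElem?_append_right le_rfl]; simp

theorem fd_append {a b : List X} (e d : List X) (h : FD a b) : FD (a ++ e) (b ++ d) := by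
  obtain ⟨i, x, y, hT, hx, hy, hxy⟩ := h
  have hia := (List.getElem?_eq_some_iff.mp hx).1
  have hib := (List.getElem?_eq_some_iff.mp hy).1
  refine ⟨i, x, y, ?_, ?_, ?_, hxy⟩
  · rw [List.take_append, List.take_append,
      Nat.sub_eq_zero_of_le hia.le, Nat.sub_eq_zero_of_le hib.le]
    simp [hT]
  · rw [List.getElem?_append, if_pos hia]; exact hx
  · rw [List.getElem?_append, if_pos hib]; exact hy

theorem fd_append_left {a b : List X} (e : List X) (h : FD a b) : FD (a ++ e) b := by
  simpa using fd_append e [] h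

theorem fd_append_right {a b : List X} (d : List X) (h : FD a b) : FD a (b ++ d) := by
  simpa using fd_append [] d h

theorem fd_prepend {a b : List X} (p : List X) (h : FD a b) : FD (p ++ a) (p ++ b) := by
  obtain ⟨i, x, y, hT, hx, hy, hxy⟩ := h
  refine ⟨p.length + i, x, y, ?_, ?_, ?_, hxy⟩
  · rw [List.take_length_add_append, List.take_length_add_append, hT]
  · rw [List.getElem?_append_right (by omega), Nat.add_sub_cancel_left]; exact hx
  · rw [List.getElem?_append_right (by omega), Nat.add_sub_cancel_left]; exact hy

theorem not_fd_of_prefix {a b : List X} (h : a <+: b) : ¬ FD a b := by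
  rintro ⟨i, x, y, hT, hx, hy, hxy⟩
  obtain ⟨t, rfl⟩ := h
  have hia := (List.getElem?_eq_some_iff.mp hx).1
  rw [List.getElem?_append, if_pos hia, hx] at hy
  cases hy
  exact lt_irrefl _ hxy

theorem fd_take_eq {e d : List X} {k m : ℕ} (hkm : k < m) (hTT : e.take m = d.take m) :
    e[k]? = d[k]? := by
  have e1 : (e.take m)[k]? = e[k]? := by rw [List.getElem?_take, if_pos hkm]
  have e2 : (d.take m)[k]? = d[k]? := by rw [List.getElem?_take, if_pos hkm]
  rw [← e1, ← e2, hTT]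

theorem fd_asymm {a b : List X} (h1 : FD a b) (h2 : FD b a) : False := by
  obtain ⟨i, x, y, hT, hx, hy, hxy⟩ := h1
  obtain ⟨j, x', y', hT', hx', hy', hxy'⟩ := h2
  rcases lt_trichotomy i j with hij | rfl | hji
  · have := fd_take_eq hij hT'
    rw [hx, hy] at this; cases this; exact lt_irrefl _ hxy
  · rw [hx'] at hy; rw [hy'] at hx
    cases hx; cases hy
    exact lt_irrefl _ (hxy.trans hxy')
  · have := fd_take_eq hji hT
    rw [hx', hy'] at this; cases this; exact lt_irrefl _ hxy'

theorem fd_split {a e b : List X} (h : FD (a ++ e) b) :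
    FD a b ∨ (a <+: b ∧ FD e (b.drop a.length)) := by
  obtain ⟨i, x, y, hT, hx, hy, hxy⟩ := h
  by_cases hia : i < a.length
  · left
    refine ⟨i, x, y, ?_, ?_, hy, hxy⟩
    · rw [← hT, List.take_append, Nat.sub_eq_zero_of_le hia.le]; simp
    · rw [List.getElem?_append, if_pos hia] at hx; exact hx
  · right
    push_neg at hia
    have htk : b.take a.length = a := by
      have := congrArg (List.take a.length) hT
      rw [List.take_take, List.take_take, min_eq_left hia] at this
      rw [← this, List.take_append, Nat.sub_self]; simp
    refine ⟨List.prefix_iff_eq_take.mpr htk.symm, i - a.length, x, y, ?_, ?_, ?_, hxy⟩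
    · have hb : b.take i = a ++ (b.drop a.length).take (i - a.length) := by
        conv_lhs => rw [← Nat.add_sub_cancel' hia, List.take_add, htk]
      rw [hb] at hT
      rw [List.take_append, List.take_of_length_le hia] at hT
      exact List.append_cancel_left hT
    · rw [List.getElem?_append_right hia] at hx; exact hx
    · rw [List.getElem?_drop, Nat.add_sub_cancel' hia]; exact hy

theorem fd_split' {a b d : List X} (h : FD a (b ++ d)) :
    FD a b ∨ (b <+: a ∧ FD (a.drop b.length) d) := by
  obtain ⟨i, x, y, hT, hx, hy, hxy⟩ := h
  by_cases hib : i < b.length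
  · left
    refine ⟨i, x, y, ?_, hx, ?_, hxy⟩
    · rw [hT, List.take_append, Nat.sub_eq_zero_of_le hib.le]; simp
    · rw [List.getElem?_append, if_pos hib] at hy; exact hy
  · right
    push_neg at hib
    have htk : a.take b.length = b := by
      have := congrArg (List.take b.length) hT
      rw [List.take_take, List.take_take, min_eq_left hib] at this
      rw [this, List.take_append, Nat.sub_self]; simp
    refine ⟨List.prefix_iff_eq_take.mpr htk.symm, i - b.length, x, y, ?_, ?_, ?_, hxy⟩
    · have ha : a.take i = b ++ (a.drop b.length).take (i - b.length) := by
        conv_lhs => rw [← Nat.add_sub_cancel' hib, List.take_add, htk]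
      rw [ha] at hT
      rw [List.take_append, List.take_of_length_le hib] at hT
      exact List.append_cancel_left hT
    · rw [List.getElem?_drop, Nat.add_sub_cancel' hib]; exact hx
    · rw [List.getElem?_append_right hib] at hy; exact hy

theorem lexLt_of_fd {a b : List X} (h : FD a b) : LexLt a b := Or.inl (fd_iff_rst.mp h)

theorem fd_of_lexLt {a b : List X} (hle : a.length ≤ b.length) (h : LexLt a b) : FD a b := by
  rcases h with h | ⟨hp, hne⟩
  · exact fd_iff_rst.mpr h
  · exact absurd (hp.eq_of_length (le_antisymm hp.length_le hle)) hne

/-- Lemma A: a Lyndon word is FD-greater than each of its proper nonempty suffixes. -/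
theorem lyndon_fd_suffix {u s : List X} (hu : IsLyndon u) (hs : s <:+ u) (hne : s ≠ u)
    (hs0 : s ≠ []) : FD s u := by
  obtain ⟨v, hv⟩ := hs
  have hv0 : v ≠ [] := by rintro rfl; exact hne hv
  have h2 : FD (s ++ v) u := by
    refine fd_of_lexLt ?_ (hu.2 v s hv.symm hv0 hs0)
    rw [← hv]; simp [Nat.add_comm]
  rcases fd_split h2 with h | ⟨hp, hfd⟩
  · exact h
  · exfalso
    obtain ⟨t, hst⟩ := hp
    have hlen : s.length < u.length := by
      have := congrArg List.length hv
      have hv0' : 0 < v.length := List.length_pos_iff.mpr hv0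
      simp at this; omega
    have ht0 : t ≠ [] := by
      rintro rfl
      rw [List.append_nil] at hst
      exact hne hst
    have hdrop : u.drop s.length = t := by
      rw [← hst, List.drop_append, Nat.sub_self, List.drop_of_length_le le_rfl]
      simp
    rw [hdrop] at hfd
    have h4 : FD (t ++ s) u := by
      refine fd_of_lexLt ?_ (hu.2 s t hst.symm hs0 ht0)
      rw [← hst]; simp [Nat.add_comm]
    have hlent : t.length = v.length := by
      have e1 := congrArg List.length hv
      have e2 := congrArg List.length hst
      simp at e1 e2; omega
    rcases fd_split h4 with h5 | ⟨hp5, _⟩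
    · rw [← hv] at h5
      rcases fd_split' h5 with h6 | ⟨hp6, _⟩
      · exact fd_asymm hfd h6
      · have hvt : v = t := hp6.eq_of_length hlent.symm
        rw [← hvt, hv] at h4
        exact not_fd_of_prefix List.prefix_rfl h4
    · -- t <+: u, and |t| = |v| forces t = v, so t ++ s = u, contradiction
      have hvp : v <+: u := ⟨s, hv⟩
      have : t = v := List.IsPrefix.eq_of_length
        (List.prefix_of_prefix_length_le hp5 hvp (by omega)) hlent
      subst this
      rw [hv] at h4
      exact not_fd_of_prefix List.prefix_rfl h4

/-- Lemma B: converse criterion. -/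
theorem lyndon_of_fd {u : List X} (h0 : u ≠ [])
    (h : ∀ v w : List X, u = v ++ w → v ≠ [] → w ≠ [] → FD w u) : IsLyndon u :=
  ⟨h0, fun v w hvw hv hw => lexLt_of_fd (fd_append_left v (h v w hvw hv hw))⟩

theorem key_no_border {u u1 u2 : List X} (hu : IsLyndon u) (h : IsShirshov u u1 u2) :
    ∀ (n : ℕ) (s : List X), s.length ≤ n → s ≠ [] → s <:+ u1 → s ≠ u1 → s <+: u → False := by
  obtain ⟨hsplit, h1, h2, hL2, hmax⟩ := h
  intro n
  induction n with
  | zero =>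
    intro s hs hs0 _ _ _
    exact hs0 (List.length_eq_zero_iff.mp (Nat.le_zero.mp hs))
  | succ n IH =>
    intro s hsn hs0 hsuf hne hpre
    have hs_lt : s.length < u1.length :=
      lt_of_le_of_ne hsuf.length_le (fun hl => hne (hsuf.eq_of_length hl))
    have hs_pos : 0 < s.length := List.length_pos_iff.mpr hs0
    have h2_pos : 0 < u2.length := List.length_pos_iff.mpr h2
    -- z := s ++ u2
    have hz_suf : s ++ u2 <:+ u := by
      obtain ⟨p, hp⟩ := hsuf
      exact ⟨p, by rw [hsplit, ← hp, List.append_assoc]⟩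
    have hzlen : (s ++ u2).length < u.length := by
      rw [hsplit]; simp; omega
    have hzne : s ++ u2 ≠ u := fun he => by rw [he] at hzlen; omega
    obtain ⟨q, hq⟩ := hpre   -- s ++ q = u
    have hzLyndon : IsLyndon (s ++ u2) := by
      refine lyndon_of_fd (by simp [hs0]) ?_
      intro v w hz_eq hv0 hw0
      have hw_suf_z : w <:+ s ++ u2 := ⟨v, hz_eq.symm⟩
      have hwz_len : v.length + w.length = s.length + u2.length := by
        have := congrArg List.length hz_eq
        simp at this; omega
      have hv_pos : 0 < v.length := List.length_pos_iff.mpr hv0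
      have hw_pos : 0 < w.length := List.length_pos_iff.mpr hw0
      by_cases hwle : w.length ≤ u2.length
      · -- Case A : w is a suffix of u2
        have hw_suf_u2 : w <:+ u2 := List.suffix_of_suffix_length_le hw_suf_z ⟨s, rfl⟩ hwle
        have hw_suf_u : w <:+ u := hw_suf_u2.trans ⟨u1, hsplit.symm⟩
        have hwne_u : w ≠ u := by
          intro he
          have := congrArg List.length he
          rw [hsplit] at this; simp at this; omega
        have hFDwu : FD w u := lyndon_fd_suffix hu hw_suf_u hwne_u hw0
        rw [← hq] at hFDwu
        rcases fd_split' hFDwu with hA | ⟨hpw, _⟩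
        · exact fd_append_right u2 hA
        · -- s <+: w
          by_cases hws : w.length ≤ s.length
          · -- then s = w, so s is also a suffix of u : contradiction with Lemma A
            have hsw : s = w := hpw.eq_of_length (le_antisymm hpw.length_le hws)
            have hs_suf_u : s <:+ u := by rw [hsw]; exact hw_suf_u
            have hs_ne_u : s ≠ u := by
              intro he
              have hlu : u.length = s.length := by rw [he]
              rw [hsplit] at hlu; simp at hlu; omega
            exact absurd (lyndon_fd_suffix hu hs_suf_u hs_ne_u hs0)
              (not_fd_of_prefix ⟨q, hq⟩)
          · -- w = s ++ r' with r' a proper nonempty suffix of u2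
            obtain ⟨r', hr'⟩ := hpw   -- s ++ r' = w
            have hr'0 : r' ≠ [] := by
              rintro rfl
              rw [List.append_nil] at hr'
              rw [← hr'] at hws; omega
            have hr'_suf : r' <:+ u2 := List.IsSuffix.trans ⟨s, hr'⟩ hw_suf_u2
            have hr'_ne : r' ≠ u2 := by
              intro he
              have := congrArg List.length hr'
              rw [he] at this; simp at this; omega
            have hFDr' : FD r' u2 := lyndon_fd_suffix hL2 hr'_suf hr'_ne hr'0
            have := fd_prepend s hFDr'
            rwa [hr'] at this
      · -- Case B : w = s' ++ u2 with s' a proper nonempty suffix of s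
        push_neg at hwle
        have hvlen : v.length < s.length := by omega
        have hv_pre_s : v <+: s :=
          List.prefix_of_prefix_length_le ⟨w, hz_eq.symm⟩ ⟨u2, rfl⟩ hvlen.le
        obtain ⟨s', hs'⟩ := hv_pre_s   -- v ++ s' = s
        have hw_eq : w = s' ++ u2 := by
          apply List.append_cancel_left (as := v)
          rw [← hz_eq, ← hs', List.append_assoc]
        have hs'_len : s'.length = s.length - v.length := by
          have := congrArg List.length hs'; simp at this; omega
        have hs'0 : s' ≠ [] := by
          intro he
          rw [he] at hs'_len; simp at hs'_len; omega
        have hw_suf_u : w <:+ u := hw_suf_z.trans hz_suf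
        have hwne : w ≠ u := by
          intro he
          have := congrArg List.length he
          rw [hsplit] at this; simp at this; omega
        have hFDwu : FD w u := lyndon_fd_suffix hu hw_suf_u hwne hw0
        rw [← hq] at hFDwu
        rcases fd_split' hFDwu with hA | ⟨hpw, _⟩
        · rw [hw_eq] at hA ⊢
          exact fd_append_right u2 hA
        · -- s <+: w : then s' <+: s, use induction hypothesis
          have hs'_pre_w : s' <+: w := ⟨u2, hw_eq.symm⟩
          have hs'_pre_s : s' <+: s :=
            List.prefix_of_prefix_length_le hs'_pre_w hpw (by omega)
          have hs'_suf_u1 : s' <:+ u1 := List.IsSuffix.trans ⟨v, hs'⟩ hsuf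
          have hs'_ne_u1 : s' ≠ u1 := by
            intro he; rw [he] at hs'_len; omega
          exact absurd (hs'_pre_s.trans ⟨q, hq⟩)
            (fun hp' => IH s' (by omega) hs'0 hs'_suf_u1 hs'_ne_u1 hp')
    have := hmax (s ++ u2) hz_suf hzne hzLyndon
    rw [List.length_append] at this; omega

theorem shirshov_left_lyndon (u u1 u2 : List X) (hu : IsLyndon u) (hlen : 2 ≤ u.length)
    (h : IsShirshov u u1 u2) : IsLyndon u1 := by
  have hk := key_no_border hu h
  obtain ⟨hsplit, h1, h2, hL2, hmax⟩ := h
  refine lyndon_of_fd h1 ?_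
  intro p s hps hp0 hs0
  have hp_pos : 0 < p.length := List.length_pos_iff.mpr hp0
  have hs_len : s.length < u1.length := by
    have := congrArg List.length hps; simp at this; omega
  have hsuf_s_u1 : s <:+ u1 := ⟨p, hps.symm⟩
  have hz_suf : s ++ u2 <:+ u := by
    refine ⟨p, ?_⟩
    rw [hsplit, hps, List.append_assoc]
  have hzne : s ++ u2 ≠ u := by
    intro he
    have := congrArg List.length he
    rw [hsplit] at this; simp at this; omega
  have hFD : FD (s ++ u2) u := lyndon_fd_suffix hu hz_suf hzne (by simp [hs0])
  rcases fd_split hFD with hA | ⟨hpre, _⟩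
  · rw [hsplit] at hA
    rcases fd_split' hA with hB | ⟨hpB, _⟩
    · exact hB
    · exact absurd hpB.length_le (by omega)
  · exact absurd hpre (fun hp' =>
      hk s.length s le_rfl hs0 hsuf_s_u1 (fun he => by rw [he] at hs_len; omega) hp')
end

section
/- Every non-empty word u can be written uniquely as a product u = w1·w2···wr of Lyndon words with w1 ≤_lex w2 ≤_lex ··· ≤_lex wr (the Lyndon decomposition). -/
set_option linter.unusedSectionVars false
set_option maxHeartbeats 1000000

namespace CFLAux

section Generic
variable {α : Type*} [LinearOrder α]

theorem prefix_lex {r : α → α → Prop} : ∀ {p l : List α}, p <+: l → p ≠ l → List.Lex r p l := by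
  intro p l h hne
  obtain ⟨t, rfl⟩ := h
  induction p with
  | nil =>
    cases t with
    | nil => exact absurd rfl hne
    | cons b t => exact List.Lex.nil
  | cons a p ih =>
    exact List.Lex.cons (ih (by simpa using hne))

theorem lt_of_prefix {p l : List α} (h : p <+: l) (hne : p ≠ l) : p < l := prefix_lex h hne

theorem lex_append : ∀ {x y : List α}, List.Lex (· < ·) x y → ¬ x <+: y →
    ∀ z w : List α, x ++ z < y ++ w := by
  intro x y h
  induction h with
  | nil => intro hp; exact absurd (List.nil_prefix) hp
  | @rel a l₁ b l₂ hab => intro _ z w; exact List.Lex.rel hab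
  | @cons a l₁ l₂ h ih =>
    intro hp z w
    exact List.Lex.cons (ih (fun hpre => hp (List.cons_prefix_cons.mpr ⟨rfl, hpre⟩)) z w)

theorem not_prefix_of_lt_length {x y : List α} (h : x < y) (hl : y.length ≤ x.length) :
    ¬ x <+: y := fun hp =>
  absurd (hp.eq_of_length (le_antisymm hp.length_le hl) ▸ h) (lt_irrefl _)

theorem lex_append' {x y : List α} (h : x < y) (hl : y.length ≤ x.length) (z w : List α) :
    x ++ z < y ++ w :=
  lex_append h (not_prefix_of_lt_length h hl) z w

theorem lt_of_append_lt : ∀ (x : List α) {u v : List α}, x ++ u < x ++ v → u < v := by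
  intro x
  induction x with
  | nil => intro u v h; exact h
  | cons a x ih =>
    intro u v h
    have h' : List.Lex (· < ·) (a :: (x ++ u)) (a :: (x ++ v)) := h
    cases h' with
    | rel hab => exact absurd hab (lt_irrefl a)
    | cons h'' => exact ih h''

theorem append_lt_append_left (x : List α) {u v : List α} (h : u < v) : x ++ u < x ++ v :=
  List.Lex.append_left _ h x

/-- Lyndon word: smaller than all of its nontrivial rotations. -/
def Lyn (u : List α) : Prop :=
  u ≠ [] ∧ ∀ v w : List α, u = v ++ w → v ≠ [] → w ≠ [] → u < w ++ v

theorem Lyn.lt_suffix {u : List α} (hu : Lyn u) {v w : List α} (huvw : u = v ++ w)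
    (hv : v ≠ []) (hw : w ≠ []) : u < w := by
  have hr : u < w ++ v := hu.2 v w huvw hv hw
  have hlen : w.length < u.length := by
    have := congrArg List.length huvw
    simp only [List.length_append] at this
    have : 0 < v.length := List.length_pos_iff.mpr hv
    omega
  rcases lt_trichotomy u w with h | h | h
  · exact h
  · exact absurd (congrArg List.length h) (by omega)
  · -- w < u; show w is a prefix of u
    have hwp : w <+: u := by
      by_contra hp
      have : w ++ v < u ++ [] := lex_append h hp v []
      rw [List.append_nil] at this
      exact absurd hr (asymm this)
    obtain ⟨z, hz⟩ := hwp
    have hzne : z ≠ [] := by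
      rintro rfl
      rw [List.append_nil] at hz
      exact absurd (congrArg List.length hz) (by omega)
    -- u = w ++ z, so z < v by cancellation
    have hzv : z < v := lt_of_append_lt w (by rw [← hz] at hr; exact hr)
    have hzlen : v.length ≤ z.length := by
      have h1 := congrArg List.length huvw
      have h2 := congrArg List.length hz
      simp only [List.length_append] at h1 h2
      omega
    have h2 : u < z ++ w := hu.2 w z hz.symm hw hzne
    have : z ++ w < v ++ w := lex_append' hzv hzlen w w
    rw [← huvw] at this
    exact absurd h2 (asymm this)

theorem lyn_of_suffix {u : List α} (hne : u ≠ [])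
    (h : ∀ v w : List α, u = v ++ w → v ≠ [] → w ≠ [] → u < w) : Lyn u := by
  refine ⟨hne, fun v w huvw hv hw => ?_⟩
  have h1 : u < w := h v w huvw hv hw
  have hlen : w.length ≤ u.length := by
    have := congrArg List.length huvw
    simp only [List.length_append] at this
    omega
  have := lex_append' h1 hlen [] v
  rwa [List.append_nil] at this

theorem lyn_singleton (a : α) : Lyn [a] := by
  refine ⟨by simp, fun v w huvw hv hw => ?_⟩
  exfalso
  have := congrArg List.length huvw
  simp only [List.length_append, List.length_cons, List.length_nil] at this
  have h1 : 0 < v.length := List.length_pos_iff.mpr hv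
  have h2 : 0 < w.length := List.length_pos_iff.mpr hw
  omega

theorem lyn_append_lt {a b : List α} (ha : Lyn a) (hb : Lyn b) (h : a < b) : a ++ b < b := by
  by_cases hp : a <+: b
  · obtain ⟨b', rfl⟩ := hp
    have hb' : b' ≠ [] := by rintro rfl; rw [List.append_nil] at h; exact absurd h (lt_irrefl a)
    exact append_lt_append_left a (hb.lt_suffix rfl ha.1 hb')
  · have := lex_append h hp b []
    rwa [List.append_nil] at this

theorem lyn_append {a b : List α} (ha : Lyn a) (hb : Lyn b) (h : a < b) : Lyn (a ++ b) := by
  apply lyn_of_suffix (by simp [ha.1])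
  intro v w huvw hv hw
  rcases lt_trichotomy v.length a.length with hl | hl | hl
  · -- v is a proper prefix of a
    rcases List.append_eq_append_iff.mp huvw.symm with ⟨k, hk1, hk2⟩ | ⟨k, hk1, hk2⟩
    · -- a = v ++ k, w = k ++ b
      have hk : k ≠ [] := by
        rintro rfl
        rw [List.append_nil] at hk1
        exact absurd (congrArg List.length hk1) (by omega)
      have h1 : a < k := ha.lt_suffix hk1 hv hk
      have : a ++ b < k ++ b := lex_append' h1 (by
        have := congrArg List.length hk1
        simp only [List.length_append] at this
        omega) b b
      rwa [← hk2] at this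
    · -- v = a ++ k, contradiction with length
      exfalso
      have := congrArg List.length hk1
      simp only [List.length_append] at this
      omega
  · -- v = a, w = b
    have hva : v = a := by
      have hp1 : v <+: (a ++ b) := ⟨w, huvw.symm⟩
      have hp2 : a <+: (a ++ b) := ⟨b, rfl⟩
      have := List.prefix_of_prefix_length_le hp1 hp2 (le_of_eq hl)
      exact this.eq_of_length hl
    subst hva
    have : w = b := by
      have := huvw
      rw [List.append_cancel_left_eq] at this
      exact this.symm
    subst this
    exact lyn_append_lt ha hb h
  · -- a is a proper prefix of v; w is a proper suffix of b
    rcases List.append_eq_append_iff.mp huvw.symm with ⟨k, hk1, hk2⟩ | ⟨k, hk1, hk2⟩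
    · exfalso
      have := congrArg List.length hk1
      simp only [List.length_append] at this
      omega
    · -- v = a ++ k, b = k ++ w
      have hk : k ≠ [] := by
        rintro rfl
        rw [List.append_nil] at hk1
        exact absurd (congrArg List.length (hk1.symm)) (by omega)
      have h1 : b < w := hb.lt_suffix hk2 hk hw
      exact lt_trans (lyn_append_lt ha hb h) h1


theorem exists_decomp : ∀ (n : ℕ) (ws : List (List α)), ws.length ≤ n → (∀ w ∈ ws, Lyn w) →
    ∃ ws' : List (List α), ws'.length ≤ ws.length ∧ ws'.flatten = ws.flatten ∧ (∀ w ∈ ws', Lyn w) ∧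
      ws'.Chain' (fun a b => b < a ∨ a = b) := by
  intro n
  induction n with
  | zero =>
    intro ws h _
    have : ws = [] := List.eq_nil_of_length_eq_zero (Nat.le_zero.mp h)
    subst this
    exact ⟨[], le_refl _, rfl, by simp, List.isChain_nil⟩
  | succ n ih =>
    intro ws hlen hLyn
    cases ws with
    | nil => exact ⟨[], le_refl _, rfl, by simp, List.isChain_nil⟩
    | cons a t =>
      obtain ⟨t', ht'len, ht'join, ht'lyn, ht'chain⟩ :=
        ih t (by simp at hlen; omega) (fun w hw => hLyn w (List.mem_cons_of_mem _ hw))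
      cases t' with
      | nil =>
        refine ⟨[a], by simp, ?_, ?_, List.isChain_singleton a⟩
        · have : t.flatten = [] := by simpa using ht'join.symm
          simp [this]
        · intro w hw
          simp at hw
          subst hw
          exact hLyn _ (List.mem_cons_self)
      | cons b t'' =>
        by_cases hR : b < a ∨ a = b
        · refine ⟨a :: b :: t'', by simp at ht'len ⊢; omega, ?_, ?_, ?_⟩
          · simp only [List.flatten_cons] at ht'join ⊢
            rw [ht'join]
          · intro w hw
            rcases List.mem_cons.mp hw with rfl | hw
            · exact hLyn w (List.mem_cons_self)
            · exact ht'lyn w hw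
          · exact List.isChain_cons_cons.mpr ⟨hR, ht'chain⟩
        · push_neg at hR
          have hab : a < b := lt_of_le_of_ne hR.1 hR.2
          have hLab : Lyn (a ++ b) :=
            lyn_append (hLyn a (List.mem_cons_self)) (ht'lyn b (List.mem_cons_self)) hab
          have hlen2 : ((a ++ b) :: t'').length ≤ n := by
            simp at ht'len hlen ⊢
            omega
          have hall : ∀ w ∈ (a ++ b) :: t'', Lyn w := by
            intro w hw
            rcases List.mem_cons.mp hw with rfl | hw
            · exact hLab
            · exact ht'lyn w (List.mem_cons_of_mem _ hw)
          obtain ⟨ws'', hlen'', hjoin'', hlyn'', hch''⟩ := ih ((a ++ b) :: t'') hlen2 hall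
          refine ⟨ws'', ?_, ?_, hlyn'', hch''⟩
          · simp at hlen'' ht'len ⊢
            omega
          · rw [hjoin'']
            have h2 : ((a ++ b) :: t'').flatten = a ++ (b :: t'').flatten := by
              simp [List.append_assoc]
            rw [h2, ht'join, List.flatten_cons]

theorem join_decomp : ∀ (l : List (List α)) (x y : List α), x ++ y = l.flatten →
    ∃ l1 l2 p, l = l1 ++ l2 ∧ x = l1.flatten ++ p ∧
      (p = [] ∨ ∃ h t, l2 = h :: t ∧ p ≠ [] ∧ p <+: h) := by
  intro l
  induction l with
  | nil =>
    intro x y h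
    simp only [List.flatten_nil] at h
    have hx : x = [] := (List.append_eq_nil_iff.mp h).1
    exact ⟨[], [], [], by simp, by simp [hx], Or.inl rfl⟩
  | cons hd t ih =>
    intro x y h
    rw [List.flatten_cons] at h
    rcases List.append_eq_append_iff.mp h with ⟨k, hk1, hk2⟩ | ⟨k, hk1, hk2⟩
    · -- hd = x ++ k, y = k ++ t.flatten
      by_cases hx : x = []
      · exact ⟨[], hd :: t, [], rfl, by simp [hx], Or.inl rfl⟩
      · exact ⟨[], hd :: t, x, rfl, by simp, Or.inr ⟨hd, t, rfl, hx, ⟨k, hk1.symm⟩⟩⟩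
    · -- x = hd ++ k, t.flatten = k ++ y
      obtain ⟨l1, l2, p, h1, h2, h3⟩ := ih k y hk2.symm
      exact ⟨hd :: l1, l2, p, by simp [h1], by simp [hk1, h2, List.append_assoc], h3⟩

theorem chain_head {w : List α} {r : List (List α)}
    (h : List.Chain' (fun a b : List α => b < a ∨ a = b) (w :: r)) {x : List α} (hx : x ∈ r) :
    x < w ∨ w = x := by
  haveI : IsTrans (List α) (fun a b : List α => b < a ∨ a = b) := by
    constructor
    rintro a b c (h1 | rfl) (h2 | rfl)
    · exact Or.inl (lt_trans h2 h1)
    · exact Or.inl h1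
    · exact Or.inl h2
    · exact Or.inr rfl
  rw [List.Chain', List.isChain_iff_pairwise] at h
  exact (List.pairwise_cons.mp h).1 x hx

theorem head_not_longer {w y w' : List α} {r' : List (List α)}
    (hw : Lyn w) (hlyn : ∀ x ∈ w' :: r', Lyn x)
    (hch : List.Chain' (fun a b : List α => b < a ∨ a = b) (w' :: r'))
    (heq : w ++ y = (w' :: r').flatten) (hlen : w'.length < w.length) : False := by
  obtain ⟨l1, l2, p, hsplit, hxp, hcase⟩ := join_decomp _ _ _ heq
  have hw'ne : w' ≠ [] := (hlyn w' (List.mem_cons_self)).1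
  cases l1 with
  | nil =>
    simp only [List.flatten_nil, List.nil_append] at hxp
    rcases hcase with rfl | ⟨h, t, hl2, hpne, hph⟩
    · exact hw.1 hxp
    · have : h = w' := by
        rw [hl2] at hsplit
        simp at hsplit
        exact hsplit.1.symm
      subst this
      subst hxp
      exact absurd hph.length_le (by omega)
  | cons a l1t =>
    have ha : a = w' ∧ r' = l1t ++ l2 := by
      simp at hsplit
      exact ⟨hsplit.1.symm, hsplit.2⟩
    obtain ⟨rfl, hr'⟩ := ha
    have hw'w : a < w :=
      lt_of_prefix ⟨l1t.flatten ++ p, by rw [hxp, List.flatten_cons, List.append_assoc]⟩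
        (fun hh => by rw [hh] at hlen; omega)
    rcases hcase with rfl | ⟨h, t, hl2, hpne, hph⟩
    · -- p = [] : w = join (w' :: l1t)
      rw [List.append_nil] at hxp
      have hl1t : l1t ≠ [] := by
        rintro rfl
        simp at hxp
        rw [hxp] at hlen
        omega
      set z := l1t.getLast hl1t with hz
      have hzmem : z ∈ r' := by
        rw [hr']
        exact List.mem_append_left _ (List.getLast_mem hl1t)
      have hzlyn : Lyn z := hlyn z (List.mem_cons_of_mem _ hzmem)
      have hdecomp : w = (a ++ l1t.dropLast.flatten) ++ z := by
        conv_lhs => rw [hxp]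
        rw [List.flatten_cons, List.append_assoc]
        congr 1
        conv_lhs => rw [← List.dropLast_append_getLast hl1t]
        rw [List.flatten_append]
        simp [hz]
      have hwz : w < z := hw.lt_suffix hdecomp (by simp [hw'ne]) hzlyn.1
      rcases chain_head hch hzmem with h1 | h1
      · exact lt_irrefl w (lt_trans (lt_trans hwz h1) hw'w)
      · rw [← h1] at hwz
        exact lt_irrefl w (lt_trans hwz hw'w)
    · -- p ≠ [], p <+: h
      have hhmem : h ∈ r' := by
        rw [hr', hl2]
        exact List.mem_append_right _ (List.mem_cons_self)
      have hjne : (a :: l1t).flatten ≠ [] := by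
        simp [List.flatten_cons, hw'ne]
      have hwp : w < p := hw.lt_suffix hxp hjne hpne
      have hpleh : p < h ∨ p = h := by
        by_cases hpe : p = h
        · exact Or.inr hpe
        · exact Or.inl (lt_of_prefix hph hpe)
      have hhw' : h < a ∨ a = h := chain_head hch hhmem
      have hwlt : w < a := by
        rcases hpleh with h2 | rfl
        · rcases hhw' with h3 | rfl
          · exact lt_trans (lt_trans hwp h2) h3
          · exact lt_trans hwp h2
        · rcases hhw' with h3 | rfl
          · exact lt_trans hwp h3
          · exact hwp
      exact lt_irrefl w (lt_trans hwlt hw'w)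

theorem decomp_unique : ∀ (l l' : List (List α)), (∀ w ∈ l, Lyn w) →
    List.Chain' (fun a b : List α => b < a ∨ a = b) l → (∀ w ∈ l', Lyn w) →
    List.Chain' (fun a b : List α => b < a ∨ a = b) l' → l.flatten = l'.flatten → l = l' := by
  intro l
  induction l with
  | nil =>
    intro l' _ _ h2 _ hj
    cases l' with
    | nil => rfl
    | cons w r =>
      exfalso
      simp only [List.flatten_nil, List.flatten_cons] at hj
      exact (h2 w (List.mem_cons_self)).1 (List.append_eq_nil_iff.mp hj.symm).1
  | cons w r ih =>
    intro l' h1 hc1 h2 hc2 hj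
    cases l' with
    | nil =>
      exfalso
      simp only [List.flatten_nil, List.flatten_cons] at hj
      exact (h1 w (List.mem_cons_self)).1 (List.append_eq_nil_iff.mp hj).1
    | cons w' r' =>
      have hww' : w.length = w'.length := by
        rcases lt_trichotomy w.length w'.length with hl | hl | hl
        · exact absurd (head_not_longer (y := r'.flatten) (h2 w' (List.mem_cons_self)) h1 hc1
            (by rw [hj, List.flatten_cons]) hl) not_false
        · exact hl
        · exact absurd (head_not_longer (y := r.flatten) (h1 w (List.mem_cons_self)) h2 hc2
            (by rw [← hj, List.flatten_cons]) hl) not_false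
      simp only [List.flatten_cons] at hj
      obtain ⟨rfl, hrr⟩ := List.append_inj hj hww'
      have htail : r = r' := by
        apply ih r' (fun x hx => h1 x (List.mem_cons_of_mem _ hx)) hc1.tail
          (fun x hx => h2 x (List.mem_cons_of_mem _ hx)) hc2.tail hrr
      rw [htail]

theorem cfl (u : List α) (hu : u ≠ []) :
    ∃! ws : List (List α), u = ws.flatten ∧ (∀ w ∈ ws, Lyn w) ∧
      ws.Chain' (fun a b : List α => b < a ∨ a = b) := by
  clear hu
  have hjoin0 : (u.map fun x => [x]).flatten = u := by
    induction u with
    | nil => rfl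
    | cons a t iht => simp [iht]
  have hsingle : ∀ w ∈ (u.map fun x => [x]), Lyn w := by
    intro w hw
    simp only [List.mem_map] at hw
    obtain ⟨x, _, rfl⟩ := hw
    exact lyn_singleton x
  obtain ⟨ws, _, hjoin, hlyn, hch⟩ := exists_decomp (u.map fun x => [x]).length _ le_rfl hsingle
  refine ⟨ws, ⟨by rw [hjoin, hjoin0], hlyn, hch⟩, ?_⟩
  rintro ws' ⟨hj', hl', hc'⟩
  exact decomp_unique ws' ws hl' hc' hlyn hch (by rw [← hj', hjoin, hjoin0])

end Generic

end CFLAux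

variable {X : Type*} [LinearOrder X]

theorem lexLt_iff (u v : List X) : LexLt u v ↔ List.Lex (fun a b : X => b < a) v u := by
  constructor
  · rintro (⟨r, s, t, a, b, hab, rfl, rfl⟩ | ⟨hpre, hne⟩)
    · exact List.Lex.append_left (fun a b : X => b < a) (List.Lex.rel (r := fun a b : X => b < a) hab) r
    · exact CFLAux.prefix_lex hpre hne
  · intro h
    induction h with
    | nil => exact Or.inr ⟨List.nil_prefix, by simp⟩
    | @rel a l₁ b l₂ h => exact Or.inl ⟨[], l₂, l₁, b, a, h, rfl, rfl⟩
    | @cons a l₁ l₂ h ih =>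
      rcases ih with ⟨r, s, t, x, y, hxy, hu, hv⟩ | ⟨hpre, hne⟩
      · exact Or.inl ⟨a :: r, s, t, x, y, hxy, by rw [hu]; rfl, by rw [hv]; rfl⟩
      · exact Or.inr ⟨List.cons_prefix_cons.mpr ⟨rfl, hpre⟩, by simpa using hne⟩

theorem lexLt_iff_dual (u v : List X) : LexLt u v ↔ @LT.lt (List Xᵒᵈ) _ v u := by
  rw [lexLt_iff]
  constructor
  · exact fun h => h
  · exact fun h => h

theorem isLyndon_iff_dual (w : List X) : IsLyndon w ↔ CFLAux.Lyn (α := Xᵒᵈ) w := by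
  unfold IsLyndon CFLAux.Lyn
  refine and_congr Iff.rfl ?_
  refine forall_congr' fun v => forall_congr' fun w' => ?_
  refine imp_congr Iff.rfl (imp_congr Iff.rfl (imp_congr Iff.rfl ?_))
  exact lexLt_iff_dual (w' ++ v) w

theorem lyndon_decomposition (u : List X) (hu : u ≠ []) :
    ∃! ws : List (List X), u = ws.flatten ∧ (∀ w ∈ ws, IsLyndon w) ∧
      ws.Chain' (fun a b => LexLt a b ∨ a = b) := by
  have hrel : ∀ a b : List X, (LexLt a b ∨ a = b) ↔ (@LT.lt (List Xᵒᵈ) _ b a ∨ a = b) :=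
    fun a b => or_congr (lexLt_iff_dual a b) Iff.rfl
  obtain ⟨ws, ⟨h1, h2, h3⟩, h4⟩ := CFLAux.cfl (α := Xᵒᵈ) u hu
  refine ⟨ws, ⟨h1, fun w hw => (isLyndon_iff_dual (X := X) w).mpr (h2 w hw),
    List.IsChain.imp (fun ⦃a b⦄ hab => (hrel a b).mpr hab) h3⟩, ?_⟩
  rintro ws' ⟨g1, g2, g3⟩
  exact h4 ws' ⟨g1, fun w hw => (isLyndon_iff_dual (X := X) w).mp (g2 w hw),
    List.IsChain.imp (fun ⦃a b⦄ hab => (hrel a b).mp hab) g3⟩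
end

section
/- If v is a Lyndon word that is a factor of a word u with Lyndon decomposition u = w1·w2···wr, then v is a factor of one of the words w1, ..., wr. -/
variable {X : Type*} [LinearOrder X]

/-- `u` and `v` differ at some position, with `u` smaller there. -/
def Diff (u v : List X) : Prop :=
  ∃ (r s t : List X) (a b : X), a < b ∧ u = r ++ a :: s ∧ v = r ++ b :: t

lemma diff_irrefl (u : List X) : ¬ Diff u u := by
  rintro ⟨r, s, t, a, b, hab, h1, h2⟩
  rw [h1] at h2
  have h3 : a :: s = b :: t := List.append_cancel_left h2
  injection h3 with h4 _
  subst h4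
  exact lt_irrefl _ hab

lemma diff_append {u v x y : List X} (h : Diff u v) : Diff (u ++ x) (v ++ y) := by
  obtain ⟨r, s, t, a, b, hab, rfl, rfl⟩ := h
  exact ⟨r, s ++ x, t ++ y, a, b, hab, by simp, by simp⟩

lemma diff_strip {c x y : List X} (h : Diff (c ++ x) (c ++ y)) : Diff x y := by
  induction c with
  | nil => simpa using h
  | cons d c ih =>
    obtain ⟨r, s, t, a, b, hab, h1, h2⟩ := h
    cases r with
    | nil =>
      rw [List.nil_append] at h1 h2
      injection h1 with ha _
      injection h2 with hb _
      subst ha; subst hb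
      exact absurd hab (lt_irrefl _)
    | cons e r =>
      rw [List.cons_append] at h1 h2
      injection h1 with _ h1b
      injection h2 with _ h2b
      exact ih ⟨r, s, t, a, b, hab, h1b, h2b⟩

lemma diff_not_prefix {u v : List X} (h : Diff u v) (hp : u <+: v) : False := by
  obtain ⟨e, rfl⟩ := hp
  have h2 := diff_append (x := e) (y := ([] : List X)) h
  rw [List.append_nil] at h2
  exact diff_irrefl _ h2

lemma diff_not_prefix' {u v : List X} (h : Diff u v) (hp : v <+: u) : False := by
  obtain ⟨e, rfl⟩ := hp
  have h2 := diff_append (x := ([] : List X)) (y := e) h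
  rw [List.append_nil] at h2
  exact diff_irrefl _ h2

lemma diff_trans {a b c : List X} (h1 : Diff a b) (h2 : Diff b c) : Diff a c := by
  obtain ⟨r1, s1, t1, x1, y1, hxy1, rfl, rfl⟩ := h1
  obtain ⟨r2, s2, t2, x2, y2, hxy2, hb, rfl⟩ := h2
  rcases List.prefix_or_prefix_of_prefix (⟨y1 :: t1, rfl⟩ : r1 <+: r1 ++ y1 :: t1)
      (⟨x2 :: s2, hb.symm⟩ : r2 <+: r1 ++ y1 :: t1) with ⟨ρ, rfl⟩ | ⟨ρ, rfl⟩
  · rw [List.append_assoc] at hb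
    have h3 := List.append_cancel_left hb
    cases ρ with
    | nil =>
      rw [List.nil_append] at h3
      injection h3 with he _
      exact ⟨r1, s1, t2, x1, y2, lt_trans hxy1 (by rw [he]; exact hxy2), rfl, by simp⟩
    | cons d ρ' =>
      rw [List.cons_append] at h3
      injection h3 with hd _
      subst hd
      exact ⟨r1, s1, ρ' ++ y2 :: t2, x1, y1, hxy1, rfl, by simp⟩
  · rw [List.append_assoc] at hb
    have h3 := (List.append_cancel_left hb).symm
    cases ρ with
    | nil =>
      rw [List.nil_append] at h3
      injection h3 with he _
      exact ⟨r2, s1, t2, x1, y2, lt_trans hxy1 (by rw [← he]; exact hxy2), by simp, rfl⟩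
    | cons d ρ' =>
      rw [List.cons_append] at h3
      injection h3 with hd _
      subst hd
      exact ⟨r2, ρ' ++ x1 :: s1, t2, x2, y2, hxy2, by simp, rfl⟩

lemma diff_asymm {u v : List X} (h1 : Diff u v) (h2 : Diff v u) : False :=
  diff_irrefl _ (diff_trans h1 h2)

lemma lexLt_eq_len {u v : List X} (h : LexLt u v) (hl : u.length = v.length) : Diff u v := by
  rcases h with h | ⟨hp, hne⟩
  · exact h
  · exact absurd (hp.eq_of_length hl.symm) hne

/-- Extract from a difference against `w ++ e` either a difference against `w`, or that `w`
is a proper prefix. -/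
lemma diff_of_append {u w e : List X} (h : Diff u (w ++ e)) :
    Diff u w ∨ (w <+: u ∧ w ≠ u) := by
  obtain ⟨r, s, t, a, b, hab, rfl, hwe⟩ := h
  rcases List.prefix_or_prefix_of_prefix (⟨b :: t, hwe.symm⟩ : r <+: w ++ e)
      (⟨e, rfl⟩ : w <+: w ++ e) with ⟨ρ, rfl⟩ | ⟨ρ, rfl⟩
  · cases ρ with
    | nil =>
      right
      refine ⟨⟨a :: s, by simp⟩, ?_⟩
      intro he
      rw [List.append_nil] at he
      simp at he
    | cons d ρ' =>
      left
      rw [List.append_assoc] at hwe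
      have h3 := List.append_cancel_left hwe
      rw [List.cons_append] at h3
      injection h3 with hd _
      subst hd
      exact ⟨r, s, ρ', a, d, hab, rfl, rfl⟩
  · right
    refine ⟨⟨ρ ++ a :: s, by simp⟩, ?_⟩
    intro he
    have hl := congrArg List.length he
    simp at hl

lemma lexLt_trans {u v w : List X} (h1 : LexLt u v) (h2 : LexLt v w) : LexLt u w := by
  rcases h1 with h1 | ⟨⟨e1, rfl⟩, hne1⟩
  · rcases h2 with h2 | ⟨⟨e2, rfl⟩, hne2⟩
    · exact Or.inl (diff_trans h1 h2)
    · exact diff_of_append h1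
  · rcases h2 with h2 | ⟨⟨e2, rfl⟩, hne2⟩
    · have h3 := diff_append (x := e1) (y := ([] : List X)) h2
      rw [List.append_nil] at h3
      exact Or.inl h3
    · refine Or.inr ⟨⟨e2 ++ e1, by simp⟩, ?_⟩
      intro he
      rw [List.append_assoc] at he
      have he2 := List.self_eq_append_right.mp he
      apply hne2
      rw [(List.append_eq_nil_iff.mp he2).1, List.append_nil]

/-- A difference of equal-length left factors gives a difference or equality. -/
lemma diff_extract_eq_len {m s t t' : List X} (h : Diff (m ++ t) (s ++ t'))
    (hl : m.length = s.length) : Diff m s ∨ m = s := by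
  obtain ⟨r, s1, t1, a, b, hab, h1, h2⟩ := h
  by_cases hc : r.length < m.length
  · left
    have hrm : r <+: m :=
      List.prefix_of_prefix_length_le ⟨a :: s1, h1.symm⟩ ⟨t, rfl⟩ (le_of_lt hc)
    obtain ⟨μ, rfl⟩ := hrm
    have hrs : r <+: s :=
      List.prefix_of_prefix_length_le ⟨b :: t1, h2.symm⟩ ⟨t', rfl⟩ (by omega)
    obtain ⟨ν, rfl⟩ := hrs
    cases μ with
    | nil => simp at hc
    | cons d μ' =>
      cases ν with
      | nil =>
        rw [List.append_nil] at hl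
        simp only [List.length_append, List.length_cons] at hl
        omega
      | cons d' ν' =>
        rw [List.append_assoc] at h1 h2
        have h3 := List.append_cancel_left h1
        have h4 := List.append_cancel_left h2
        rw [List.cons_append] at h3 h4
        injection h3 with hd _
        injection h4 with hd' _
        subst hd; subst hd'
        exact ⟨r, μ', ν', d, d', hab, rfl, rfl⟩
  · right
    push_neg at hc
    have hmr : m <+: r :=
      List.prefix_of_prefix_length_le ⟨t, rfl⟩ ⟨a :: s1, h1.symm⟩ hc
    have hms : m <+: s ++ t' := hmr.trans ⟨b :: t1, h2.symm⟩
    have := List.prefix_of_prefix_length_le hms ⟨t', rfl⟩ (le_of_eq hl)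
    exact this.eq_of_length hl

/-- A Lyndon word strictly dominates each of its proper nonempty suffixes, with a genuine
letter difference. -/
lemma lyndon_suffix {v s t : List X} (hv : IsLyndon v) (hst : v = s ++ t)
    (hs : s ≠ []) (ht : t ≠ []) : Diff t v := by
  have hrot := hv.2 s t hst hs ht
  have hlen : (t ++ s).length = v.length := by simp [hst]; omega
  have hD : Diff (t ++ s) v := lexLt_eq_len hrot hlen
  obtain ⟨r, s1, t1, a, b, hab, h1, h2⟩ := hD
  by_cases hc : t.length ≤ r.length
  · -- border case: t is a prefix of v; derive a contradiction
    exfalso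
    have htr : t <+: r :=
      List.prefix_of_prefix_length_le ⟨s, h1⟩ ⟨a :: s1, rfl⟩ hc
    obtain ⟨ρ, rfl⟩ := htr
    set m : List X := ρ ++ b :: t1 with hm
    have hvm : v = t ++ m := by rw [h2, hm, List.append_assoc]
    have hmne : m ≠ [] := by simp [hm]
    have hDsm : Diff s m := by
      apply diff_strip (c := t)
      rw [← hvm]
      exact ⟨t ++ ρ, s1, t1, a, b, hab, h1, h2⟩
    have hlsm : m.length = s.length := by
      have l1 := congrArg List.length hst
      have l2 := congrArg List.length hvm
      simp at l1 l2
      omega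
    have hrot2 := hv.2 t m hvm ht hmne
    rw [hst] at hrot2
    have hD2 : Diff (m ++ t) (s ++ t) := lexLt_eq_len hrot2 (by simp; omega)
    rcases diff_extract_eq_len hD2 hlsm with hms | heq
    · exact diff_asymm hms hDsm
    · subst heq
      exact diff_irrefl _ hDsm
  · push_neg at hc
    have hrt : r <+: t :=
      List.prefix_of_prefix_length_le ⟨a :: s1, rfl⟩ ⟨s, h1⟩ (le_of_lt hc)
    obtain ⟨τ, rfl⟩ := hrt
    cases τ with
    | nil => simp at hc
    | cons d τ' =>
      rw [List.append_assoc] at h1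
      have h3 := List.append_cancel_left h1
      rw [List.cons_append] at h3
      injection h3 with hd _
      subst hd
      exact ⟨r, τ', t1, d, b, hab, rfl, h2⟩

/-- Transitivity gives: head of a sorted chain is below all later elements. -/
lemma le'_of_chain : ∀ (a : List X) (l : List (List X)),
    List.Chain' (fun x y : List X => LexLt x y ∨ x = y) (a :: l) →
    ∀ b ∈ l, LexLt a b ∨ a = b := by
  intro a l
  induction l generalizing a with
  | nil => intro _ b hb; simp at hb
  | cons c l ih =>
    intro hch b hb
    have hac : LexLt a c ∨ a = c := (List.isChain_cons_cons.mp hch).1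
    have hch' := (List.isChain_cons_cons.mp hch).2
    rcases List.mem_cons.mp hb with rfl | hb'
    · exact hac
    · rcases hac with h | rfl
      · rcases ih c hch' b hb' with h' | rfl
        · exact Or.inl (lexLt_trans h h')
        · exact Or.inl h
      · exact ih a hch' b hb'

/-- The key induction: if `v` is strictly below every word of `ws`, then no prefix `z` of
`ws.flatten` can have a letter-difference below `v`. -/
lemma aux_no_prefix {v : List X} (hv : IsLyndon v) :
    ∀ ws : List (List X), (∀ w ∈ ws, IsLyndon w) → (∀ w ∈ ws, LexLt v w) →
    ∀ z, z <+: ws.flatten → Diff z v → False := by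
  intro ws
  induction ws with
  | nil =>
    intro _ _ z hz hD
    simp only [List.flatten, List.flatten_nil] at hz
    rw [List.prefix_nil] at hz
    subst hz
    obtain ⟨r, s, t, a, b, _, h1, _⟩ := hD
    simp at h1
  | cons w ws ih =>
    intro hLyn hlt z hz hD
    simp only [List.flatten, List.flatten_cons] at hz
    rcases List.prefix_or_prefix_of_prefix hz (⟨ws.flatten, rfl⟩ : w <+: w ++ ws.flatten) with
      ⟨e, he⟩ | ⟨z', rfl⟩
    · -- z is a prefix of w
      have hDw : Diff w v := by
        have h2 := diff_append (x := e) (y := ([] : List X)) hD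
        rw [List.append_nil, he] at h2
        exact h2
      rcases hlt w (List.mem_cons_self) with hd | ⟨hp, _⟩
      · exact diff_asymm hDw hd
      · exact diff_not_prefix hDw hp
    · -- z = w ++ z'
      have hz' : z' <+: ws.flatten := (List.prefix_append_right_inj w).mp hz
      rcases hlt w (List.mem_cons_self) with hd | ⟨hp, hne⟩
      · have h2 : Diff v (w ++ z') := by
          have h3 := diff_append (x := ([] : List X)) (y := z') hd
          rw [List.append_nil] at h3
          exact h3
        exact diff_asymm hD h2
      · obtain ⟨v', hv'⟩ := hp
        have hv'ne : v' ≠ [] := by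
          rintro rfl
          rw [List.append_nil] at hv'
          exact hne hv'
        have hDz' : Diff z' v' := by
          apply diff_strip (c := w)
          rw [hv']
          exact hD
        have hDv' : Diff v' v :=
          lyndon_suffix hv hv'.symm (hLyn w (List.mem_cons_self)).1 hv'ne
        exact ih (fun w' hw' => hLyn w' (List.mem_cons_of_mem _ hw'))
          (fun w' hw' => hlt w' (List.mem_cons_of_mem _ hw'))
          z' hz' (diff_trans hDz' hDv')

/-- An infix of a concatenation is an infix of a part, or straddles the boundary. -/
lemma infix_split {v l₁ l₂ : List X} (h : v <:+: l₁ ++ l₂) :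
    v <:+: l₁ ∨ v <:+: l₂ ∨
      ∃ s t, v = s ++ t ∧ s ≠ [] ∧ t ≠ [] ∧ s <:+ l₁ ∧ t <+: l₂ := by
  obtain ⟨p, q, hpq⟩ := h
  by_cases h1 : p.length + v.length ≤ l₁.length
  · left
    have hpre : p ++ v <+: l₁ := by
      refine List.prefix_of_prefix_length_le ⟨q, ?_⟩ (List.prefix_append l₁ l₂) (by simp; exact h1)
      rw [← hpq]
    obtain ⟨r, hr⟩ := hpre
    exact ⟨p, r, hr⟩
  · by_cases h2 : l₁.length ≤ p.length
    · right; left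
      have hl1p : l₁ <+: p :=
        List.prefix_of_prefix_length_le (List.prefix_append l₁ l₂)
          ⟨v ++ q, by rw [← hpq]; simp⟩ h2
      obtain ⟨p', rfl⟩ := hl1p
      rw [List.append_assoc, List.append_assoc] at hpq
      have h3 := List.append_cancel_left hpq
      exact ⟨p', q, by rw [← h3]; simp⟩
    · right; right
      push_neg at h1 h2
      have hvlen : 0 < v.length := by omega
      set k := l₁.length - p.length with hk
      have hk0 : 0 < k := by omega
      have hkv : k < v.length := by omega
      have htake : (p ++ v.take k).length = l₁.length := by
        simp only [List.length_append, List.length_take]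
        omega
      have hps : p ++ v.take k = l₁ := by
        have hp1 : p ++ v.take k <+: l₁ ++ l₂ := by
          refine ⟨v.drop k ++ q, ?_⟩
          rw [← hpq]
          simp only [List.append_assoc]
          rw [← List.append_assoc (v.take k) (v.drop k) q, List.take_append_drop]
        exact (List.prefix_of_prefix_length_le hp1 (List.prefix_append l₁ l₂)
          (le_of_eq htake)).eq_of_length htake
      refine ⟨v.take k, v.drop k, (List.take_append_drop k v).symm, ?_, ?_, ?_, ?_⟩
      · intro hnil
        have := congrArg List.length hnil
        simp only [List.length_take, List.length_nil] at this
        omega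
      · intro hnil
        have := congrArg List.length hnil
        simp only [List.length_drop, List.length_nil] at this
        omega
      · exact ⟨p, hps⟩
      · refine ⟨q, ?_⟩
        have : (p ++ v.take k) ++ (v.drop k ++ q) = l₁ ++ l₂ := by
          rw [← hpq]
          simp only [List.append_assoc]
          rw [← List.append_assoc (v.take k) (v.drop k) q, List.take_append_drop]
        rw [hps] at this
        exact List.append_cancel_left this

theorem lyndon_factor_of_decomposition (u v : List X) (ws : List (List X))
    (hdec : u = ws.flatten) (hws : ∀ w ∈ ws, IsLyndon w)
    (hsort : ws.Chain' (fun a b => LexLt a b ∨ a = b))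
    (hv : IsLyndon v) (hf : v <:+: u) : ∃ w ∈ ws, v <:+: w := by
  subst hdec
  induction ws with
  | nil =>
    simp only [List.flatten, List.flatten_nil] at hf
    rw [List.infix_nil] at hf
    exact absurd hf hv.1
  | cons w ws ih =>
    simp only [List.flatten, List.flatten_cons] at hf
    rcases infix_split hf with h | h | ⟨s, t, hvst, hs, ht, hsw, htj⟩
    · exact ⟨w, List.mem_cons_self, h⟩
    · obtain ⟨w', hw', hvw'⟩ := ih (fun w' hw' => hws w' (List.mem_cons_of_mem _ hw'))
        hsort.tail h
      exact ⟨w', List.mem_cons_of_mem _ hw', hvw'⟩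
    · exfalso
      obtain ⟨d, hd⟩ := hsw
      have hwlyn := hws w (List.mem_cons_self)
      have hvw : LexLt v w := by
        rcases eq_or_ne d [] with rfl | hdne
        · rw [List.nil_append] at hd
          subst hd
          refine Or.inr ⟨⟨t, hvst.symm⟩, ?_⟩
          intro he
          rw [he] at hvst
          exact ht (List.self_eq_append_right.mp hvst)
        · have hDsw : Diff s w := lyndon_suffix hwlyn hd.symm hdne hs
          have h2 := diff_append (x := t) (y := ([] : List X)) hDsw
          rw [List.append_nil, ← hvst] at h2
          exact Or.inl h2
      have hDt : Diff t v := lyndon_suffix hv hvst hs ht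
      have hlater : ∀ w' ∈ ws, LexLt v w' := by
        intro w' hw'
        rcases le'_of_chain w ws hsort w' hw' with h | rfl
        · exact lexLt_trans hvw h
        · exact hvw
      exact aux_no_prefix hv ws (fun w' hw' => hws w' (List.mem_cons_of_mem _ hw'))
        hlater t htj hDt
end

section
/- Every Fibonacci word f_m is a Lyndon word, and the Fibonacci words are ordered as f_0 <_lex f_2 <_lex ··· <_lex f_{2r} <_lex ··· <_lex f_{2r+1} <_lex ··· <_lex f_3 <_lex f_1. -/
variable {X : Type*} [LinearOrder X]

/-- The Fibonacci words on the two-letter alphabet `Bool` with `false < true`: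
`f 0 = [false]`, `f 1 = [true]`, `f (2r) = f (2r-1) ++ f (2r-2)`, `f (2r+1) = f (2r-1) ++ f (2r)`. -/
def fibWord : ℕ → List Bool
  | 0 => [false]
  | 1 => [true]
  | (n + 2) => if n % 2 = 0 then fibWord (n + 1) ++ fibWord n else fibWord n ++ fibWord (n + 1)

/-- Strict "first difference" comparison: `u` and `v` differ at some position (within both),
and at the first difference the letter of `u` is smaller. -/
def Dlt : List X → List X → Prop
  | a :: u, b :: v => a < b ∨ (a = b ∧ Dlt u v)
  | _, _ => False

lemma Dlt_exists {u v : List X} (h : Dlt u v) :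
    ∃ (r s t : List X) (a b : X), a < b ∧ u = r ++ a :: s ∧ v = r ++ b :: t := by
  induction u generalizing v with
  | nil => cases v <;> exact absurd h (by simp [Dlt])
  | cons a u ih =>
    cases v with
    | nil => exact absurd h (by simp [Dlt])
    | cons b v =>
      rcases h with hab | ⟨rfl, h⟩
      · exact ⟨[], u, v, a, b, hab, rfl, rfl⟩
      · obtain ⟨r, s, t, c, d, hcd, hu, hv⟩ := ih h
        exact ⟨a :: r, s, t, c, d, hcd, by simp [hu], by simp [hv]⟩

lemma Dlt_of_exists {u v : List X} {r s t : List X} {a b : X}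
    (hab : a < b) (hu : u = r ++ a :: s) (hv : v = r ++ b :: t) : Dlt u v := by
  subst hu hv
  induction r with
  | nil => exact Or.inl hab
  | cons c r ih => exact Or.inr ⟨rfl, ih⟩

lemma Dlt_append_right {u v : List X} (w : List X) (h : Dlt u v) : Dlt u (v ++ w) := by
  obtain ⟨r, s, t, a, b, hab, hu, hv⟩ := Dlt_exists h
  exact Dlt_of_exists hab hu (show v ++ w = r ++ b :: (t ++ w) by simp [hv])

lemma Dlt_append_left {u v : List X} (w : List X) (h : Dlt u v) : Dlt (u ++ w) v := by
  obtain ⟨r, s, t, a, b, hab, hu, hv⟩ := Dlt_exists h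
  exact Dlt_of_exists hab (show u ++ w = r ++ a :: (s ++ w) by simp [hu]) hv

lemma Dlt_append_both {u v : List X} (w w' : List X) (h : Dlt u v) : Dlt (u ++ w) (v ++ w') :=
  Dlt_append_right w' (Dlt_append_left w h)

lemma Dlt_prepend {u v : List X} (p : List X) (h : Dlt u v) : Dlt (p ++ u) (p ++ v) := by
  induction p with
  | nil => exact h
  | cons a p ih => exact Or.inr ⟨rfl, ih⟩

lemma Dlt_trans {u v w : List X} (h1 : Dlt u v) (h2 : Dlt v w) : Dlt u w := by
  induction u generalizing v w with
  | nil => cases v <;> exact absurd h1 (by simp [Dlt])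
  | cons a u ih =>
    cases v with
    | nil => exact absurd h1 (by simp [Dlt])
    | cons b v =>
      cases w with
      | nil => exact absurd h2 (by simp [Dlt])
      | cons c w =>
        rcases h1 with hab | ⟨rfl, h1⟩
        · rcases h2 with hbc | ⟨rfl, h2⟩
          · exact Or.inl (lt_trans hab hbc)
          · exact Or.inl hab
        · rcases h2 with hbc | ⟨rfl, h2⟩
          · exact Or.inl hbc
          · exact Or.inr ⟨rfl, ih h1 h2⟩

lemma LexLt_of_Dlt {u v : List X} (h : Dlt u v) : LexLt u v := Or.inl (Dlt_exists h)

lemma LexLt_of_append {u v z : List X} (hz : z ≠ []) (h : v ++ z = u) : LexLt u v := by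
  refine Or.inr ⟨⟨z, h⟩, fun he => hz ?_⟩
  have : v ++ z = v ++ [] := by rw [h, ← he]; simp
  exact List.append_cancel_left this

/-- The suffix characterization of (anti-)Lyndon words. -/
def SufLt (u : List X) : Prop :=
  u ≠ [] ∧ ∀ w : List X, w ≠ [] → w ≠ u → w <:+ u → Dlt w u

lemma SufLt.isLyndon {u : List X} (h : SufLt u) : IsLyndon u := by
  refine ⟨h.1, fun v w huvw hv hw => ?_⟩
  have hne : w ≠ u := by
    intro he
    have := congrArg List.length huvw
    rw [he] at this
    simp at this
    exact hv this
  have hD : Dlt w u := h.2 w hw hne ⟨v, huvw.symm⟩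
  exact LexLt_of_Dlt (Dlt_append_left v hD)

lemma SufLt_singleton (a : X) : SufLt [a] := by
  refine ⟨by simp, fun w hw hne hsuf => ?_⟩
  cases w with
  | nil => exact absurd rfl hw
  | cons b t =>
    have hl : t.length + 1 ≤ 1 := by simpa using hsuf.length_le
    have ht : t = [] := List.eq_nil_of_length_eq_zero (by omega)
    subst ht
    exact absurd (hsuf.eq_of_length (by simp)) hne

lemma SufLt.append {u v : List X} (hu : SufLt u) (hv : SufLt v) (h : LexLt v u) :
    SufLt (u ++ v) := by
  have key : Dlt v (u ++ v) := by
    rcases h with ⟨r, s, t, a, b, hab, h1, h2⟩ | ⟨⟨z, hz⟩, hne⟩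
    · exact Dlt_append_right v (Dlt_of_exists hab h1 h2)
    · -- hz : u ++ z = v
      have hzne : z ≠ [] := by
        rintro rfl
        simp at hz
        exact hne hz
      have hzne2 : z ≠ v := by
        intro he
        rw [he] at hz
        have : u ++ v = [] ++ v := by simpa using hz
        exact hu.1 (List.append_cancel_right this)
      have hDz : Dlt z v := hv.2 z hzne hzne2 ⟨u, hz⟩
      rw [← hz] at hDz ⊢
      exact Dlt_prepend u hDz
  refine ⟨by simp [hu.1], fun s hs hne hsuf => ?_⟩
  obtain ⟨p, hp⟩ := hsuf
  rcases List.append_eq_append_iff.mp hp with ⟨a', ha1, ha2⟩ | ⟨c', hc1, hc2⟩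
  · -- u = p ++ a', s = a' ++ v
    rcases eq_or_ne a' [] with rfl | hane
    · simpa [ha2] using key
    · rcases eq_or_ne a' u with rfl | hane2
      · exact absurd (by rw [ha2]) hne
      · have hD : Dlt a' u := hu.2 a' hane hane2 ⟨p, ha1.symm⟩
        rw [ha2]
        exact Dlt_append_both v v hD
  · -- p = u ++ c', v = c' ++ s
    rcases eq_or_ne s v with rfl | hne2
    · exact key
    · have hD : Dlt s v := hv.2 s hs hne2 ⟨c', hc2.symm⟩
      exact Dlt_trans hD key

/- Fibonacci word facts -/

lemma fw_even (r : ℕ) : fibWord (2*r+2) = fibWord (2*r+1) ++ fibWord (2*r) := by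
  have h : (2*r) % 2 = 0 := by omega
  rw [fibWord]
  simp [h]

lemma fw_odd (r : ℕ) : fibWord (2*r+3) = fibWord (2*r+1) ++ fibWord (2*r+2) := by
  have h : (2*r+1) % 2 = 1 := by omega
  rw [show 2*r+3 = (2*r+1)+2 by ring, fibWord]
  simp [h]

lemma fibWord_ne_nil : ∀ n, fibWord n ≠ [] := by
  intro n
  induction n using Nat.strong_induction_on with
  | _ n ih =>
    match n with
    | 0 => simp [fibWord]
    | 1 => simp [fibWord]
    | (k+2) =>
      rw [fibWord]
      split <;> simp [ih k (by omega), ih (k+1) (by omega)]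

lemma Dlt_L1 : ∀ r, Dlt (fibWord (2*r)) (fibWord (2*r+1)) := by
  intro r
  induction r with
  | zero => exact Or.inl (by simp [fibWord])
  | succ r ih =>
    rw [show 2*(r+1) = 2*r+2 by ring, show 2*r+2+1 = 2*r+3 by ring, fw_even r, fw_odd r]
    apply Dlt_prepend
    rw [fw_even r]
    exact Dlt_append_right _ ih

lemma Dlt_L1' (r : ℕ) : Dlt (fibWord (2*r)) (fibWord (2*r+2)) := by
  rw [fw_even r]
  exact Dlt_append_right _ (Dlt_L1 r)

lemma Dlt_even : ∀ b a, a < b → Dlt (fibWord (2*a)) (fibWord (2*b)) := by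
  intro b
  induction b with
  | zero => omega
  | succ b ih =>
    intro a hab
    rcases eq_or_lt_of_le (Nat.lt_succ_iff.mp hab) with rfl | h
    · rw [show 2*(a+1) = 2*a+2 by ring]
      exact Dlt_L1' a
    · have := ih a h
      rw [show 2*(b+1) = 2*b+2 by ring]
      exact Dlt_trans this (Dlt_L1' b)

lemma odd_pref : ∀ b a, a ≤ b → ∃ z, fibWord (2*a+1) ++ z = fibWord (2*b+1) := by
  intro b
  induction b with
  | zero =>
    intro a ha
    interval_cases a
    exact ⟨[], by simp⟩
  | succ b ih =>
    intro a ha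
    rcases eq_or_lt_of_le ha with rfl | h
    · exact ⟨[], by simp⟩
    · obtain ⟨z, hz⟩ := ih a (by omega)
      refine ⟨z ++ fibWord (2*b+2), ?_⟩
      rw [show 2*(b+1)+1 = 2*b+3 by ring, fw_odd b, ← hz]
      simp

lemma odd_pref_strict : ∀ b a, a < b → ∃ z, z ≠ [] ∧ fibWord (2*a+1) ++ z = fibWord (2*b+1) := by
  intro b a hab
  match b, hab with
  | b+1, hab =>
    obtain ⟨z, hz⟩ := odd_pref b a (by omega)
    refine ⟨z ++ fibWord (2*b+2), by simp [fibWord_ne_nil], ?_⟩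
    rw [show 2*(b+1)+1 = 2*b+3 by ring, fw_odd b, ← hz]
    simp

lemma odd_pref_even : ∀ a b, b < a → ∃ z, z ≠ [] ∧ fibWord (2*b+1) ++ z = fibWord (2*a) := by
  intro a b hba
  match a, hba with
  | a+1, hba =>
    obtain ⟨z, hz⟩ := odd_pref a b (by omega)
    refine ⟨z ++ fibWord (2*a), by simp [fibWord_ne_nil], ?_⟩
    rw [show 2*(a+1) = 2*a+2 by ring, fw_even a, ← hz]
    simp

lemma sufLt_fibWord_pair : ∀ r, SufLt (fibWord (2*r)) ∧ SufLt (fibWord (2*r+1)) := by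
  intro r
  induction r with
  | zero => exact ⟨by simpa [fibWord] using SufLt_singleton false,
      by simpa [fibWord] using SufLt_singleton true⟩
  | succ r ih =>
    obtain ⟨he, ho⟩ := ih
    have h1 : SufLt (fibWord (2*r+2)) := by
      rw [fw_even r]
      exact ho.append he (LexLt_of_Dlt (Dlt_L1 r))
    have h2 : SufLt (fibWord (2*r+3)) := by
      rw [fw_odd r]
      exact ho.append h1 (LexLt_of_append (fibWord_ne_nil (2*r)) (fw_even r).symm)
    constructor
    · rw [show 2*(r+1) = 2*r+2 by ring]; exact h1
    · rw [show 2*(r+1)+1 = 2*r+3 by ring]; exact h2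

theorem fibWord_lyndon_and_sorted :
    (∀ m : ℕ, IsLyndon (fibWord m)) ∧
    (∀ i j : ℕ, i % 2 = 0 → j % 2 = 0 → i < j → LexLt (fibWord i) (fibWord j)) ∧
    (∀ i j : ℕ, i % 2 = 0 → j % 2 = 1 → LexLt (fibWord i) (fibWord j)) ∧
    (∀ i j : ℕ, i % 2 = 1 → j % 2 = 1 → i < j → LexLt (fibWord j) (fibWord i)) := by
  refine ⟨?_, ?_, ?_, ?_⟩
  · intro m
    rcases Nat.even_or_odd m with ⟨k, hk⟩ | ⟨k, hk⟩
    · rw [show m = 2*k by omega]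
      exact (sufLt_fibWord_pair k).1.isLyndon
    · rw [show m = 2*k+1 by omega]
      exact (sufLt_fibWord_pair k).2.isLyndon
  · intro i j hi hj hij
    rw [show i = 2*(i/2) by omega, show j = 2*(j/2) by omega]
    exact LexLt_of_Dlt (Dlt_even (j/2) (i/2) (by omega))
  · intro i j hi hj
    rw [show i = 2*(i/2) by omega, show j = 2*(j/2)+1 by omega]
    set a := i/2; set b := j/2
    rcases lt_trichotomy a b with h | h | h
    · exact LexLt_of_Dlt (Dlt_trans (Dlt_even b a h) (Dlt_L1 b))
    · rw [h]; exact LexLt_of_Dlt (Dlt_L1 b)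
    · obtain ⟨z, hzne, hz⟩ := odd_pref_even a b h
      exact LexLt_of_append hzne hz
  · intro i j hi hj hij
    rw [show i = 2*(i/2)+1 by omega, show j = 2*(j/2)+1 by omega]
    obtain ⟨z, hzne, hz⟩ := odd_pref_strict (j/2) (i/2) (by omega)
    exact LexLt_of_append hzne hz
end

section
/- Every Lyndon word that is a factor of a Fibonacci word is itself a Fibonacci word; consequently, the set of all Fibonacci words is a closed set of Lyndon words. -/
variable {X : Type*} [LinearOrder X]

/-- A set `U` of Lyndon words is closed if it contains all letters and every Lyndon factor
of a word in `U`. -/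
def IsClosedSet (U : Set (List X)) : Prop :=
  (∀ u ∈ U, IsLyndon u) ∧ (∀ a : X, [a] ∈ U) ∧
    ∀ w ∈ U, ∀ v : List X, IsLyndon v → v <:+: w → v ∈ U

namespace FibHelper

def lam : List Bool → List Bool
  | [] => []
  | a :: w => (if a then [true, true, false] else [true, false]) ++ lam w

@[simp] lemma lam_nil : lam [] = [] := rfl

lemma lam_cons (a : Bool) (w : List Bool) :
    lam (a :: w) = (if a then [true, true, false] else [true, false]) ++ lam w := rfl

lemma lam_append : ∀ u v : List Bool, lam (u ++ v) = lam u ++ lam v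
  | [], v => rfl
  | a :: u, v => by simp [lam_cons, lam_append u v]

@[simp] lemma lam_eq_nil : ∀ {w : List Bool}, lam w = [] ↔ w = []
  | [] => by simp
  | a :: w => by cases a <;> simp [lam_cons]

lemma length_le_lam : ∀ w : List Bool, w.length ≤ (lam w).length
  | [] => le_refl _
  | a :: w => by
    have := length_le_lam w
    cases a <;> simp [lam_cons] <;> omega

lemma length_lt_lam (w : List Bool) (h : w ≠ []) : w.length < (lam w).length := by
  cases w with
  | nil => simp at h
  | cons a w =>
    have := length_le_lam w
    cases a <;> simp [lam_cons] <;> omega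

lemma fib_rec (n : ℕ) : fibWord (n + 2) =
    if n % 2 = 0 then fibWord (n + 1) ++ fibWord n else fibWord n ++ fibWord (n + 1) := by
  rw [fibWord]

lemma lam_fib : ∀ n, lam (fibWord n) = fibWord (n + 2)
  | 0 => by simp [fibWord, lam_cons, fib_rec]
  | 1 => by simp [fibWord, lam_cons, fib_rec]
  | n + 2 => by
    rw [fib_rec n, fib_rec (n + 2)]
    have h1 := lam_fib n
    have h2 := lam_fib (n + 1)
    have hmod : (n + 2) % 2 = n % 2 := by omega
    rw [hmod]
    split <;> simp [lam_append, h1, h2]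

lemma fib_ne_nil : ∀ n, fibWord n ≠ []
  | 0 => by simp [fibWord]
  | 1 => by simp [fibWord]
  | n + 2 => by
    rw [fib_rec]
    split <;> simp [fib_ne_nil n]

lemma lexlt_irrefl (u : List Bool) : ¬ LexLt u u := by
  rintro (⟨r, s, t, a, b, hab, h1, h2⟩ | ⟨_, hne⟩)
  · rw [h1] at h2
    have := List.append_cancel_left h2
    injection this with h3 _
    subst h3
    exact lt_irrefl a hab
  · exact hne rfl

lemma lexlt_elim {u v : List Bool} (h : LexLt u v) (hlen : u.length = v.length) :
    ∃ (r s t : List Bool) (a b : Bool), a < b ∧ u = r ++ a :: s ∧ v = r ++ b :: t := by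
  rcases h with h | ⟨hp, hne⟩
  · exact h
  · exact absurd (hp.eq_of_length hlen.symm) hne

lemma lexlt_cons_elim {c d : Bool} {u v : List Bool}
    (h : ∃ (r s t : List Bool) (a b : Bool), a < b ∧ c :: u = r ++ a :: s ∧ d :: v = r ++ b :: t) :
    c < d ∨ (c = d ∧ ∃ (r s t : List Bool) (a b : Bool), a < b ∧ u = r ++ a :: s ∧ v = r ++ b :: t) := by
  obtain ⟨r, s, t, a, b, hab, h1, h2⟩ := h
  cases r with
  | nil =>
    injection h1 with h1a h1b
    injection h2 with h2a h2b
    subst h1a; subst h2a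
    exact Or.inl hab
  | cons e r =>
    injection h1 with h1a h1b
    injection h2 with h2a h2b
    subst h1a; subst h2a
    exact Or.inr ⟨rfl, r, s, t, a, b, hab, h1b, h2b⟩

lemma lexlt_fd_asymm : ∀ u v : List Bool,
    (∃ (r s t : List Bool) (a b : Bool), a < b ∧ u = r ++ a :: s ∧ v = r ++ b :: t) →
    (∃ (r s t : List Bool) (a b : Bool), a < b ∧ v = r ++ a :: s ∧ u = r ++ b :: t) → False := by
  intro u
  induction u with
  | nil =>
    rintro v ⟨r, s, t, a, b, hab, h1, h2⟩ _
    cases r <;> simp at h1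
  | cons c u ih =>
    intro v h1 h2
    cases v with
    | nil =>
      obtain ⟨r, s, t, a, b, hab, e1, e2⟩ := h1
      cases r <;> simp at e2
    | cons d v =>
      rcases lexlt_cons_elim h1 with hcd | ⟨rfl, h1'⟩
      · rcases lexlt_cons_elim h2 with hdc | ⟨hdc, _⟩
        · exact absurd hcd (lt_asymm hdc)
        · subst hdc; exact lt_irrefl _ hcd
      · rcases lexlt_cons_elim h2 with hdc | ⟨_, h2'⟩
        · exact lt_irrefl _ hdc
        · exact ih v h1' h2'

lemma lexlt_trichotomy : ∀ u v : List Bool, u.length = v.length →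
    u = v ∨ LexLt u v ∨ LexLt v u := by
  intro u
  induction u with
  | nil =>
    intro v h
    cases v with
    | nil => exact Or.inl rfl
    | cons b v => simp at h
  | cons a u ih =>
    intro v h
    cases v with
    | nil => simp at h
    | cons b v =>
      rcases lt_trichotomy a b with hab | rfl | hba
      · exact Or.inr (Or.inl (Or.inl ⟨[], u, v, a, b, hab, rfl, rfl⟩))
      · rcases ih v (by simpa using h) with rfl | h1 | h1
        · exact Or.inl rfl
        · obtain ⟨r, s, t, x, y, hxy, e1, e2⟩ := lexlt_elim h1 (by simpa using h)
          exact Or.inr (Or.inl (Or.inl ⟨a :: r, s, t, x, y, hxy, by simp [e1], by simp [e2]⟩))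
        · obtain ⟨r, s, t, x, y, hxy, e1, e2⟩ := lexlt_elim h1 (by simpa using h.symm)
          exact Or.inr (Or.inr (Or.inl ⟨a :: r, s, t, x, y, hxy, by simp [e1], by simp [e2]⟩))
      · exact Or.inr (Or.inr (Or.inl ⟨[], v, u, b, a, hba, rfl, rfl⟩))

lemma lexlt_asymm {u v : List Bool} (hlen : u.length = v.length)
    (h1 : LexLt u v) (h2 : LexLt v u) : False :=
  lexlt_fd_asymm u v (lexlt_elim h1 hlen) (lexlt_elim h2 hlen.symm)

lemma lexlt_mono {u v : List Bool} (hlen : u.length = v.length) (h : LexLt u v) :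
    LexLt (FibHelper.lam u) (FibHelper.lam v) := by
  obtain ⟨r, s, t, a, b, hab, h1, h2⟩ := lexlt_elim h hlen
  rw [Bool.lt_iff] at hab
  obtain ⟨rfl, rfl⟩ := hab
  subst h1; subst h2
  refine Or.inl ⟨FibHelper.lam r ++ [true], FibHelper.lam s, false :: FibHelper.lam t,
    false, true, by decide, ?_, ?_⟩
  · simp [FibHelper.lam_append, FibHelper.lam_cons]
  · simp [FibHelper.lam_append, FibHelper.lam_cons]

lemma lexlt_reflect {u v : List Bool} (hlen : u.length = v.length)
    (hlam : (FibHelper.lam u).length = (FibHelper.lam v).length)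
    (h : LexLt (FibHelper.lam u) (FibHelper.lam v)) : LexLt u v := by
  rcases lexlt_trichotomy u v hlen with rfl | h1 | h1
  · exact absurd h (lexlt_irrefl _)
  · exact h1
  · exact absurd h (fun h => lexlt_asymm hlam h (lexlt_mono hlen.symm h1))
lemma nl1 : ∀ l : List Bool, ¬ LexLt (l ++ [false]) (false :: l) := by
  intro l
  induction l with
  | nil => simpa using lexlt_irrefl [false]
  | cons a l ih =>
    rintro (h | ⟨hp, hne⟩)
    · have h' : ∃ (r s t : List Bool) (x y : Bool),
          x < y ∧ a :: (l ++ [false]) = r ++ x :: s ∧ false :: (a :: l) = r ++ y :: t := by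
        simpa using h
      rcases lexlt_cons_elim h' with haf | ⟨rfl, h2⟩
      · rw [Bool.lt_iff] at haf; exact absurd haf.2 (by simp)
      · exact ih (Or.inl h2)
    · have : (false :: a :: l) = (a :: l ++ [false]) :=
        hp.eq_of_length (by simp)
      exact hne this

lemma nl2 : ∀ l : List Bool, ¬ LexLt (true :: l) (l ++ [true]) := by
  intro l
  induction l with
  | nil => simpa using lexlt_irrefl [true]
  | cons a l ih =>
    rintro (h | ⟨hp, hne⟩)
    · have h' : ∃ (r s t : List Bool) (x y : Bool),
          x < y ∧ true :: (a :: l) = r ++ x :: s ∧ a :: (l ++ [true]) = r ++ y :: t := by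
        simpa using h
      rcases lexlt_cons_elim h' with hta | ⟨hta, h2⟩
      · rw [Bool.lt_iff] at hta; exact absurd hta.1 (by simp)
      · rw [← hta] at h2
        exact ih (Or.inl h2)
    · have : (a :: l ++ [true]) = (true :: a :: l) :=
        hp.eq_of_length (by simp)
      exact hne this

lemma lyndon_head {v : List Bool} (h : IsLyndon v) (hlen : 2 ≤ v.length) :
    ∃ w, v = true :: w := by
  cases v with
  | nil => simp at hlen
  | cons a w =>
    cases a
    · exfalso
      have hw : w ≠ [] := by
        cases w with
        | nil => simp at hlen
        | cons b w => simp
      exact nl1 w (h.2 [false] w rfl (by simp) hw)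
    · exact ⟨w, rfl⟩

lemma lyndon_last {v : List Bool} (h : IsLyndon v) (hlen : 2 ≤ v.length) :
    ∃ w, v = w ++ [false] ∧ w ≠ [] := by
  rcases List.eq_nil_or_concat v with rfl | ⟨L, b, hv⟩
  · simp at hlen
  · rw [List.concat_eq_append] at hv
    have hL : L ≠ [] := by
      rintro rfl
      rw [hv] at hlen; simp at hlen
    cases b
    · exact ⟨L, hv, hL⟩
    · exfalso
      have := h.2 L [true] hv hL (by simp)
      rw [hv] at this
      exact nl2 L (by simpa using this)

lemma lyndon_single (a : Bool) : IsLyndon [a] := by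
  refine ⟨by simp, ?_⟩
  intro v w h hv hw
  exfalso
  cases v with
  | nil => exact hv rfl
  | cons x v =>
    injection h with _ h2
    exact hw ((List.append_eq_nil_iff.mp h2.symm).2)
lemma lamP : ∀ (w v e : List Bool), v ++ [false] ++ e = FibHelper.lam w →
    ∃ w', w' <+: w ∧ v ++ [false] = FibHelper.lam w' := by
  intro w
  induction w with
  | nil =>
    intro v e h
    simp at h
  | cons a w ih =>
    intro v e h
    rw [FibHelper.lam_cons] at h
    rcases List.append_eq_append_iff.mp h with ⟨a', hB, _⟩ | ⟨c', hv, hw⟩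
    · -- (if a then ... else ...) = (v ++ [false]) ++ a'
      cases a
      · simp only [if_neg Bool.false_ne_true, Bool.false_eq_true, if_false] at hB
        rcases v with _ | ⟨x, _ | ⟨y, v'⟩⟩
        · simp at hB
        · simp at hB
          obtain ⟨rfl, rfl⟩ := hB
          exact ⟨[false], ⟨w, rfl⟩, rfl⟩
        · simp at hB
      · simp only [if_pos] at hB
        rcases v with _ | ⟨x, _ | ⟨y, _ | ⟨z, v'⟩⟩⟩
        · simp at hB
        · simp at hB
        · simp at hB
          obtain ⟨rfl, rfl, rfl⟩ := hB
          exact ⟨[true], ⟨w, rfl⟩, rfl⟩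
        · simp at hB
    · -- v ++ [false] = B ++ c', lam w = c' ++ e
      rcases List.eq_nil_or_concat c' with rfl | ⟨c'', x, rfl⟩
      · refine ⟨[a], ⟨w, rfl⟩, ?_⟩
        rw [FibHelper.lam_cons]
        simpa using hv
      · rw [List.concat_eq_append, ← List.append_assoc] at hv
        obtain ⟨hv', hfx⟩ := List.append_inj' hv rfl
        injection hfx with hfx _
        subst hfx
        rw [List.concat_eq_append] at hw
        obtain ⟨w₃, hpre, hc⟩ := ih c'' e hw.symm
        refine ⟨a :: w₃, ?_, ?_⟩
        · exact List.cons_prefix_cons.mpr ⟨rfl, hpre⟩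
        · rw [FibHelper.lam_cons, ← hc, hv', List.append_assoc]
lemma lamI : ∀ (w s v e : List Bool), s ++ v ++ e = FibHelper.lam w →
    (∃ v', v = true :: v') → (∃ v', v = v' ++ [false]) →
    (∃ w', w' <:+: w ∧ v = FibHelper.lam w') ∨ (∃ u, v = [true, false] ++ FibHelper.lam u) := by
  intro w
  induction w with
  | nil =>
    rintro s v e h ⟨v', rfl⟩ _
    simp at h
  | cons a w ih =>
    rintro s v e h hh hl
    rw [FibHelper.lam_cons] at h
    rw [List.append_assoc] at h
    rcases List.append_eq_append_iff.mp h with ⟨a', hB, hve⟩ | ⟨c', _, hw⟩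
    · -- B = s ++ a', v ++ e = a' ++ lam w
      cases a
      · simp only [if_neg Bool.false_ne_true, Bool.false_eq_true, if_false] at hB
        rcases s with _ | ⟨x, _ | ⟨y, s'⟩⟩
        · -- v ++ e = [true,false] ++ lam w = lam (false :: w)
          simp only [List.nil_append] at hB
          subst hB
          obtain ⟨v₀, rfl⟩ := hl
          obtain ⟨w', hp, hv⟩ := lamP (false :: w) v₀ e
            (by rw [hve]; rfl)
          exact Or.inl ⟨w', hp.isInfix, hv⟩
        · -- a' = [false] : head contradiction
          simp at hB
          obtain ⟨rfl, rfl⟩ := hB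
          obtain ⟨v', rfl⟩ := hh
          simp at hve
        · simp at hB
          obtain ⟨rfl, rfl, h3⟩ := hB
          obtain ⟨rfl, rfl⟩ := h3
          rcases ih [] v e (by simpa using hve) hh hl with ⟨w', hi, hv⟩ | hr
          · exact Or.inl ⟨w', List.infix_cons hi, hv⟩
          · exact Or.inr hr
      · simp only [if_pos] at hB
        rcases s with _ | ⟨x, _ | ⟨y, _ | ⟨z, s'⟩⟩⟩
        · simp only [List.nil_append] at hB
          subst hB
          obtain ⟨v₀, rfl⟩ := hl
          obtain ⟨w', hp, hv⟩ := lamP (true :: w) v₀ e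
            (by rw [hve]; rfl)
          exact Or.inl ⟨w', hp.isInfix, hv⟩
        · -- s = [true], v ++ e = [true,false] ++ lam w = lam (false :: w)
          simp at hB
          obtain ⟨rfl, rfl⟩ := hB
          obtain ⟨v₀, rfl⟩ := hl
          obtain ⟨w', hp, hv⟩ := lamP (false :: w) v₀ e
            (by rw [hve]; rfl)
          cases w' with
          | nil =>
            exfalso
            obtain ⟨v', hv'⟩ := hh
            rw [hv'] at hv
            simp at hv
          | cons b u =>
            obtain ⟨rfl, _⟩ := List.cons_prefix_cons.mp hp
            exact Or.inr ⟨u, hv⟩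
        · -- s = [true,true], v ++ e = [false] ++ lam w : head contradiction
          simp at hB
          obtain ⟨rfl, rfl, rfl⟩ := hB
          obtain ⟨v', rfl⟩ := hh
          simp at hve
        · simp at hB
          obtain ⟨rfl, rfl, rfl, h4⟩ := hB
          obtain ⟨rfl, rfl⟩ := h4
          rcases ih [] v e (by simpa using hve) hh hl with ⟨w', hi, hv⟩ | hr
          · exact Or.inl ⟨w', List.infix_cons hi, hv⟩
          · exact Or.inr hr
    · -- s = B ++ c', lam w = c' ++ (v ++ e)
      rcases ih c' v e (by rw [hw, List.append_assoc]) hh hl with ⟨w', hi, hv⟩ | hr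
      · exact Or.inl ⟨w', List.infix_cons hi, hv⟩
      · exact Or.inr hr
lemma lamA : ∀ (w v₁ v₂ : List Bool), FibHelper.lam w = v₁ ++ v₂ →
    (∃ w₁ w₂, w = w₁ ++ w₂ ∧ v₁ = FibHelper.lam w₁ ∧ v₂ = FibHelper.lam w₂) ∨
    (∃ (w₁ w₂ : List Bool) (a : Bool), w = w₁ ++ a :: w₂ ∧ v₁ = FibHelper.lam w₁ ++ [true] ∧
      v₂ = (if a then [true, false] else [false]) ++ FibHelper.lam w₂) ∨
    (∃ w₁ w₂, w = w₁ ++ true :: w₂ ∧ v₁ = FibHelper.lam w₁ ++ [true, true] ∧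
      v₂ = [false] ++ FibHelper.lam w₂) := by
  intro w
  induction w with
  | nil =>
    intro v₁ v₂ h
    obtain ⟨rfl, rfl⟩ := List.append_eq_nil_iff.mp h.symm
    exact Or.inl ⟨[], [], rfl, rfl, rfl⟩
  | cons a w ih =>
    intro v₁ v₂ h
    rw [FibHelper.lam_cons] at h
    rcases List.append_eq_append_iff.mp h.symm with ⟨a', hB, hv2⟩ | ⟨c', hv1, hw⟩
    · cases a
      · simp only [if_neg Bool.false_ne_true, Bool.false_eq_true, if_false] at hB hv2 ⊢
        rcases v₁ with _ | ⟨x, _ | ⟨y, v'⟩⟩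
        · simp only [List.nil_append] at hB
          subst hB
          exact Or.inl ⟨[], false :: w, rfl, rfl, by rw [hv2]; rfl⟩
        · simp at hB
          obtain ⟨rfl, rfl⟩ := hB
          exact Or.inr (Or.inl ⟨[], w, false, rfl, rfl, by simpa using hv2⟩)
        · simp at hB
          obtain ⟨rfl, rfl, h3⟩ := hB
          obtain ⟨rfl, rfl⟩ := h3
          exact Or.inl ⟨[false], w, rfl, rfl, by simpa using hv2⟩
      · simp only [if_pos] at hB hv2 ⊢
        rcases v₁ with _ | ⟨x, _ | ⟨y, _ | ⟨z, v'⟩⟩⟩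
        · simp only [List.nil_append] at hB
          subst hB
          exact Or.inl ⟨[], true :: w, rfl, rfl, by rw [hv2]; rfl⟩
        · simp at hB
          obtain ⟨rfl, rfl⟩ := hB
          exact Or.inr (Or.inl ⟨[], w, true, rfl, rfl, by simpa using hv2⟩)
        · simp at hB
          obtain ⟨rfl, rfl, rfl⟩ := hB
          exact Or.inr (Or.inr ⟨[], w, rfl, rfl, by simpa using hv2⟩)
        · simp at hB
          obtain ⟨rfl, rfl, rfl, h4⟩ := hB
          obtain ⟨rfl, rfl⟩ := h4
          exact Or.inl ⟨[true], w, rfl, rfl, by simpa using hv2⟩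
    · rcases ih c' v₂ hw with ⟨w₁, w₂, rfl, rfl, rfl⟩ | ⟨w₁, w₂, b, rfl, rfl, rfl⟩ |
        ⟨w₁, w₂, rfl, rfl, rfl⟩
      · exact Or.inl ⟨a :: w₁, w₂, rfl, by rw [hv1]; rfl, rfl⟩
      · exact Or.inr (Or.inl ⟨a :: w₁, w₂, b, rfl,
          by rw [hv1, FibHelper.lam_cons, List.append_assoc], rfl⟩)
      · exact Or.inr (Or.inr ⟨a :: w₁, w₂, rfl,
          by rw [hv1, FibHelper.lam_cons, List.append_assoc], rfl⟩)
lemma lam_head : ∀ (w : List Bool), w ≠ [] → ∃ z, FibHelper.lam w = true :: z := by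
  intro w hw
  cases w with
  | nil => exact absurd rfl hw
  | cons a w => cases a <;> exact ⟨_, rfl⟩

lemma lexlt_false_head {v₂ v₁ v : List Bool} (h2 : ∃ r, v₂ = false :: r)
    (hv : ∃ z, v = true :: z) : LexLt (v₂ ++ v₁) v := by
  obtain ⟨r, rfl⟩ := h2
  obtain ⟨z, rfl⟩ := hv
  exact Or.inl ⟨[], r ++ v₁, z, false, true, by decide, rfl, rfl⟩

lemma lam_lyndon {w : List Bool} (h : IsLyndon w) : IsLyndon (FibHelper.lam w) := by
  obtain ⟨hne, hL⟩ := h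
  refine ⟨by simpa using hne, ?_⟩
  intro v₁ v₂ hsplit h1 h2
  rcases lamA w v₁ v₂ hsplit with ⟨w₁, w₂, rfl, rfl, rfl⟩ |
    ⟨w₁, w₂, a, rfl, rfl, rfl⟩ | ⟨w₁, w₂, rfl, rfl, rfl⟩
  · -- aligned
    have hw₁ : w₁ ≠ [] := by rintro rfl; simp at h1
    have hw₂ : w₂ ≠ [] := by rintro rfl; simp at h2
    have hrot := hL w₁ w₂ rfl hw₁ hw₂
    have hlen : (w₂ ++ w₁).length = (w₁ ++ w₂).length := by simp; omega
    have := lexlt_mono hlen hrot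
    simpa only [FibHelper.lam_append] using this
  · cases a
    · -- cut inside a false-block: v₂ starts with false
      simp only [Bool.false_eq_true, if_false]
      refine lexlt_false_head ⟨_, rfl⟩ (lam_head _ ?_)
      rintro hnil
      exact (List.cons_ne_nil _ _) (List.append_eq_nil_iff.mp hnil).2
    · -- cut after first true of a true-block: v₂ = [true,false] ++ lam w₂
      simp only [if_pos]
      have hW : ∃ z, FibHelper.lam (w₁ ++ true :: w₂) = true :: true :: z := by
        cases w₁ with
        | nil => exact ⟨false :: FibHelper.lam w₂, by simp [FibHelper.lam_cons]⟩
        | cons b w₁' =>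
          obtain ⟨w', hw'⟩ := lyndon_head ⟨hne, hL⟩ (by simp; omega)
          rw [hw']
          exact ⟨_, rfl⟩
      obtain ⟨z, hz⟩ := hW
      rw [hz]
      exact Or.inl ⟨[true], FibHelper.lam w₂ ++ (FibHelper.lam w₁ ++ [true]), z,
        false, true, by decide, by simp, rfl⟩
  · -- cut after [true,true] of a true-block: v₂ starts with false
    refine lexlt_false_head ⟨_, rfl⟩ (lam_head _ ?_)
    rintro hnil
    exact (List.cons_ne_nil _ _) (List.append_eq_nil_iff.mp hnil).2

lemma lam_lyndon_reflect {w : List Bool} (hw : w ≠ []) (h : IsLyndon (FibHelper.lam w)) :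
    IsLyndon w := by
  refine ⟨hw, ?_⟩
  intro p q hpq hp hq
  subst hpq
  have h2 := h.2 (FibHelper.lam p) (FibHelper.lam q) (FibHelper.lam_append p q)
    (by simpa) (by simpa)
  rw [← FibHelper.lam_append] at h2
  have hlen : (q ++ p).length = (p ++ q).length := by simp; omega
  have hlamlen : (FibHelper.lam (q ++ p)).length = (FibHelper.lam (p ++ q)).length := by
    rw [FibHelper.lam_append, FibHelper.lam_append]; simp; omega
  exact lexlt_reflect hlen hlamlen h2

lemma fib_lyndon : ∀ n, IsLyndon (fibWord n)
  | 0 => lyndon_single false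
  | 1 => lyndon_single true
  | n + 2 => by
    rw [← FibHelper.lam_fib n]
    exact lam_lyndon (fib_lyndon n)
lemma mem_true_tt {u : List Bool} (h : true ∈ u) :
    ∃ s e, FibHelper.lam u = s ++ [true, true] ++ e := by
  induction u with
  | nil => simp at h
  | cons a u ih =>
    cases a
    · have h' : true ∈ u := by simpa using h
      obtain ⟨s, e, hs⟩ := ih h'
      exact ⟨[true, false] ++ s, e, by simp [FibHelper.lam_cons, hs]⟩
    · exact ⟨[], false :: FibHelper.lam u, by simp [FibHelper.lam_cons]⟩

lemma lam_comm_of_no_true : ∀ {u : List Bool}, true ∉ u →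
    FibHelper.lam u ++ [true, false] = [true, false] ++ FibHelper.lam u := by
  intro u
  induction u with
  | nil => simp
  | cons a u ih =>
    intro h
    cases a
    · have h' : true ∉ u := fun hc => h (List.mem_cons_of_mem _ hc)
      have := ih h'
      simp only [FibHelper.lam_cons, Bool.false_eq_true, if_false]
      rw [List.append_assoc, this]
    · exact absurd List.mem_cons_self h

lemma main_ind : ∀ (n : ℕ) (v : List Bool) (m : ℕ), v.length ≤ n → IsLyndon v →
    v <:+: fibWord m → ∃ p, v = fibWord p := by
  intro n
  induction n with
  | zero =>
    intro v m hl hly _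
    exact absurd (List.eq_nil_of_length_eq_zero (Nat.le_antisymm hl (Nat.zero_le _))) hly.1
  | succ n ih =>
    intro v m hl hly hinf
    match hv : v, hl with
    | [], _ => exact absurd rfl hly.1
    | [false], _ => exact ⟨0, rfl⟩
    | [true], _ => exact ⟨1, rfl⟩
    | x :: y :: v', hl => ?_
    subst hv
    have h2 : 2 ≤ (x :: y :: v').length := by simp
    set v := x :: y :: v' with hvdef
    match m with
    | 0 =>
      have := hinf.length_le
      simp [fibWord, hvdef] at this
    | 1 =>
      have := hinf.length_le
      simp [fibWord, hvdef] at this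
    | m + 2 =>
      rw [← FibHelper.lam_fib m] at hinf
      obtain ⟨s, e, hse⟩ := hinf
      obtain ⟨v₁, hv1⟩ := lyndon_head hly h2
      obtain ⟨v₂, hv2, _⟩ := lyndon_last hly h2
      rcases lamI (fibWord m) s v e hse ⟨v₁, hv1⟩ ⟨v₂, hv2⟩ with ⟨w', hwinf, hvw⟩ | ⟨u, hvu⟩
      · have hw'ne : w' ≠ [] := by
          rintro rfl
          rw [hvw] at hvdef
          simp at hvdef
        have hwl := lam_lyndon_reflect hw'ne (hvw ▸ hly)
        have hlt : w'.length ≤ n := by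
          have h3 := FibHelper.length_lt_lam w' hw'ne
          rw [← hvw] at h3
          omega
        obtain ⟨p, rfl⟩ := ih w' m hlt hwl hwinf
        exact ⟨p + 2, by rw [hvw, FibHelper.lam_fib]⟩
      · by_cases ht : true ∈ u
        · exfalso
          obtain ⟨s', e', hs'⟩ := mem_true_tt ht
          have hsplit : v = ([true, false] ++ s') ++ ([true, true] ++ e') := by
            rw [hvu, hs']; simp
          have hrot := hly.2 _ _ hsplit (by simp) (by simp)
          rcases hrot with ⟨r, s'', t'', a, b, hab, e1, e2⟩ | ⟨hp, hne⟩
          · rw [Bool.lt_iff] at hab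
            obtain ⟨rfl, rfl⟩ := hab
            rcases r with _ | ⟨c, _ | ⟨d, r⟩⟩
            · simp at e1
            · simp at e1
            · rw [hvu] at e2
              simp at e1 e2
              obtain ⟨_, hd, _⟩ := e1
              obtain ⟨_, hd', _⟩ := e2
              rw [hd'] at hd
              exact absurd hd (by decide)
          · have hlen : v.length = (([true, true] ++ e') ++ ([true, false] ++ s')).length := by
              rw [hsplit]; simp; omega
            exact hne (hp.eq_of_length hlen)
        · cases u with
          | nil =>
            refine ⟨2, ?_⟩
            rw [hvu]
            rw [FibHelper.fib_rec 0]
            simp [fibWord, FibHelper.lam_nil]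
          | cons b u' =>
            exfalso
            have hb : b = false := by
              cases b
              · rfl
              · exact absurd List.mem_cons_self ht
            subst hb
            have ht' : true ∉ u' := fun hc => ht (List.mem_cons_of_mem _ hc)
            have hsplit : v = [true, false] ++ ([true, false] ++ FibHelper.lam u') := by
              rw [hvu, FibHelper.lam_cons]; simp
            have hrot := hly.2 _ _ hsplit (by simp) (by simp)
            have hcomm : ([true, false] ++ FibHelper.lam u') ++ [true, false] =
                [true, false] ++ ([true, false] ++ FibHelper.lam u') := by
              rw [List.append_assoc, lam_comm_of_no_true ht']
            rw [hcomm, ← hsplit] at hrot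
            exact lexlt_irrefl v hrot

end FibHelper

theorem fibWords_closed :
    (∀ (v : List Bool) (m : ℕ), IsLyndon v → v <:+: fibWord m → ∃ p : ℕ, v = fibWord p) ∧
    IsClosedSet {w : List Bool | ∃ m : ℕ, w = fibWord m} := by
  have main : ∀ (v : List Bool) (m : ℕ), IsLyndon v → v <:+: fibWord m →
      ∃ p : ℕ, v = fibWord p := fun v m h1 h2 =>
    FibHelper.main_ind v.length v m le_rfl h1 h2
  refine ⟨main, ?_, ?_, ?_⟩
  · rintro u ⟨m, rfl⟩
    exact FibHelper.fib_lyndon m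
  · intro a
    cases a
    · exact ⟨0, rfl⟩
    · exact ⟨1, rfl⟩
  · rintro w ⟨m, rfl⟩ v hv hinf
    exact main v m hv hinf
end

section
/- Let U be a closed set of Lyndon words and let (u, v) ∈ Υ(U), i.e., u, v ∈ U with u >_lex v and no w ∈ U satisfies u >_lex w >_lex v. Then the Shirshov factorization of the Lyndon word uv is (u, v). -/
variable {X : Type*} [LinearOrder X]

/-- `Υ(U)`: pairs `u >_lex v` of elements of `U` with no element of `U` strictly between. -/
def Upsilon (U : Set (List X)) : Set (List X × List X) :=
  {p | p.1 ∈ U ∧ p.2 ∈ U ∧ LexLt p.2 p.1 ∧ ¬∃ w ∈ U, LexLt p.2 w ∧ LexLt w p.1}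

instance UL_sto : IsStrictTotalOrder X (· > ·) := {}

theorem UL_lex_append_self (r : X → X → Prop) :
    ∀ (v : List X) {w : List X}, w ≠ [] → List.Lex r v (v ++ w)
  | [], w, hw => by
      cases w with
      | nil => exact absurd rfl hw
      | cons a l => exact List.Lex.nil
  | a :: v', w, hw => List.Lex.cons (UL_lex_append_self r v' hw)

theorem UL_iff (u v : List X) : LexLt u v ↔ List.Lex (· > ·) v u := by
  constructor
  · rintro (⟨r, s, t, a, b, hab, rfl, rfl⟩ | ⟨⟨w, rfl⟩, hne⟩)
    · exact List.Lex.append_left (· > ·) (List.Lex.rel (show b > a from hab)) r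
    · exact UL_lex_append_self _ v (fun h => hne (by simp [h]))
  · intro h
    induction h with
    | @nil a l => exact Or.inr ⟨List.nil_prefix, by simp⟩
    | @cons a l₁ l₂ h ih =>
        rcases ih with ⟨r, s, t, x, y, hxy, h1, h2⟩ | ⟨hpre, hne⟩
        · exact Or.inl ⟨a :: r, s, t, x, y, hxy, by rw [h1]; rfl, by rw [h2]; rfl⟩
        · exact Or.inr ⟨(List.cons_prefix_cons).2 ⟨rfl, hpre⟩, by simpa using hne⟩
    | @rel a₁ l₁ a₂ l₂ h => exact Or.inl ⟨[], l₂, l₁, a₂, a₁, h, rfl, rfl⟩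

theorem UL_trans {a b c : List X} (h1 : LexLt a b) (h2 : LexLt b c) : LexLt a c := by
  rw [UL_iff] at h1 h2 ⊢
  exact List.lex_trans (fun a b => gt_trans a b) h2 h1

theorem UL_asymm {a b : List X} (h1 : LexLt a b) (h2 : LexLt b a) : False := by
  rw [UL_iff] at h1 h2
  exact Std.Asymm.asymm _ _ h1 h2

theorem UL_irrefl (a : List X) : ¬ LexLt a a := fun h => UL_asymm h h

theorem UL_total (u v : List X) : u = v ∨ LexLt u v ∨ LexLt v u := by
  rcases trichotomous_of (List.Lex (· > ·)) v u with h | h | h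
  · exact Or.inr (Or.inl ((UL_iff u v).2 h))
  · exact Or.inl h.symm
  · exact Or.inr (Or.inr ((UL_iff v u).2 h))

theorem UL_lex_append_cancel {r : X → X → Prop} [IsIrrefl X r] :
    ∀ (s : List X) {t₁ t₂ : List X}, List.Lex r (s ++ t₁) (s ++ t₂) → List.Lex r t₁ t₂
  | [], _, _ => id
  | a :: s', _, _ => fun h => UL_lex_append_cancel s' ((List.lex_cons_iff).1 h)

theorem UL_lex_append_both {r : X → X → Prop} {q p : List X} (h : List.Lex r q p)
    (hlen : p.length ≤ q.length) : ∀ (t t' : List X), List.Lex r (q ++ t) (p ++ t') := by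
  induction h with
  | @nil a l => simp at hlen
  | @cons a l₁ l₂ h ih =>
      intro t t'
      exact List.Lex.cons (ih (by simpa using hlen) t t')
  | @rel a₁ l₁ a₂ l₂ h =>
      intro t t'
      exact List.Lex.rel h


/-- Lyndon words are unbordered. -/
theorem UL_unbordered {u t : List X} (hL : IsLyndon u) (htne : t ≠ []) (htnu : t ≠ u)
    (hsuf : t <:+ u) (hpre : t <+: u) : False := by
  obtain ⟨p, hp⟩ := hsuf
  obtain ⟨q, hq⟩ := hpre
  have hpne : p ≠ [] := by rintro rfl; exact htnu (by simpa using hp)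
  have hqne : q ≠ [] := by rintro rfl; exact htnu (by simpa using hq)
  have h1 : LexLt (t ++ p) u := hL.2 p t hp.symm hpne htne
  have h2 : LexLt (q ++ t) u := hL.2 t q hq.symm htne hqne
  rw [UL_iff] at h1 h2
  rw [← hq] at h1
  rw [← hp] at h2
  -- h1 : Lex (t ++ q) (t ++ p), h2 : Lex (p ++ t) (q ++ t)
  have h3 : List.Lex (· > ·) q p := UL_lex_append_cancel t h1
  have hlen : p.length ≤ q.length := by
    have h4 := congrArg List.length hp
    have h5 := congrArg List.length hq
    simp at h4 h5
    omega
  exact Std.Asymm.asymm _ _ (UL_lex_append_both h3 hlen t t) h2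

/-- A nonempty proper suffix of a Lyndon word is `<` it, or a prefix of it. -/
theorem UL_suffix {u p t : List X} (hL : IsLyndon u) (hu : u = p ++ t) (hp : p ≠ [])
    (ht : t ≠ []) : LexLt t u ∨ t <+: u := by
  rcases hL.2 p t hu hp ht with ⟨r, s, s', a, b, hab, h1, h2⟩ | ⟨hpre, hne⟩
  · by_cases hlen : r.length + 1 ≤ t.length
    · have hra : r ++ [a] <+: t := by
        apply List.prefix_of_prefix_length_le _ (List.prefix_append t p) (by simpa using hlen)
        exact ⟨s, by simpa using h1.symm⟩
      obtain ⟨t₂, ht₂⟩ := hra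
      refine Or.inl (Or.inl ⟨r, t₂, s', a, b, hab, ?_, h2⟩)
      rw [← ht₂]; simp
    · have htr : t <+: r := by
        apply List.prefix_of_prefix_length_le (List.prefix_append t p) _ (by omega)
        exact ⟨a :: s, h1.symm⟩
      exact Or.inr (htr.trans ⟨b :: s', h2.symm⟩)
  · exfalso
    apply hne
    apply List.IsPrefix.eq_of_length hpre
    rw [hu]; simp [Nat.add_comm]

/-- Existence of a lex-maximal element in a nonempty list of words. -/
theorem UL_exists_max : ∀ L : List (List X), L ≠ [] → ∃ m ∈ L, ∀ t ∈ L, t = m ∨ LexLt t m := by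
  intro L
  induction L with
  | nil => simp
  | cons x L' ih =>
    intro _
    rcases eq_or_ne L' [] with rfl | hL'
    · exact ⟨x, by simp, by intro t ht; simp at ht; exact Or.inl ht⟩
    · obtain ⟨m, hm, hmax⟩ := ih hL'
      rcases UL_total x m with heq | hxm | hmx
      · refine ⟨m, List.mem_cons_of_mem _ hm, ?_⟩
        intro t ht
        rcases List.mem_cons.1 ht with rfl | ht'
        · exact Or.inl heq
        · exact hmax t ht'
      · refine ⟨m, List.mem_cons_of_mem _ hm, ?_⟩
        intro t ht
        rcases List.mem_cons.1 ht with rfl | ht'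
        · exact Or.inr hxm
        · exact hmax t ht'
      · refine ⟨x, List.mem_cons_self (a := x) (l := L'), ?_⟩
        intro t ht
        rcases List.mem_cons.1 ht with rfl | ht'
        · exact Or.inl rfl
        · rcases hmax t ht' with rfl | h
          · exact Or.inr hmx
          · exact Or.inr (UL_trans h hmx)

/-- The lex-maximal nonempty proper suffix is Lyndon. -/
theorem UL_max_lyndon {u m : List X} (hmsuf : m <:+ u) (hmne : m ≠ []) (hmnu : m ≠ u)
    (hmax : ∀ t : List X, t <:+ u → t ≠ [] → t ≠ u → t = m ∨ LexLt t m) : IsLyndon m := by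
  refine ⟨hmne, ?_⟩
  intro p q hpq hp hq
  have hqm : q <:+ m := ⟨p, hpq.symm⟩
  have hqu : q <:+ u := hqm.trans hmsuf
  have hlenqm : q.length < m.length := by
    have := congrArg List.length hpq
    simp at this
    have : p.length ≠ 0 := fun h => hp (List.eq_nil_of_length_eq_zero h)
    omega
  have hlenmu : m.length < u.length := by
    obtain ⟨w, hw⟩ := hmsuf
    have hwne : w ≠ [] := by rintro rfl; exact hmnu (by simpa using hw)
    have := congrArg List.length hw
    simp at this
    have : w.length ≠ 0 := fun h => hwne (List.eq_nil_of_length_eq_zero h)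
    omega
  have hqnu : q ≠ u := by
    intro h
    rw [h] at hlenqm
    omega
  rcases hmax q hqu hq hqnu with rfl | hqltm
  · omega
  · rcases hqltm with ⟨r, s, t', a, b, hab, hq1, hm1⟩ | ⟨hpre, hne⟩
    · refine Or.inl ⟨r, s ++ p, t', a, b, hab, ?_, hm1⟩
      rw [hq1]; simp
    · exfalso
      have := hpre.length_le
      omega

theorem upsilon_shirshov (U : Set (List X)) (hU : IsClosedSet U) (u v : List X)
    (huv : (u, v) ∈ Upsilon U) : IsShirshov (u ++ v) u v := by
  obtain ⟨hu, hv, hvu, hbet⟩ := huv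
  obtain ⟨hLall, hlet, hclosed⟩ := hU
  have hLu : IsLyndon u := hLall u hu
  have hLv : IsLyndon v := hLall v hv
  refine ⟨rfl, hLu.1, hLv.1, hLv, ?_⟩
  intro s hs hne hLs
  by_contra hlen
  push_neg at hlen
  -- s = u₂ ++ v with u₂ a nonempty proper suffix of u
  have hvs : v <:+ s := List.suffix_of_suffix_length_le (List.suffix_append u v) hs hlen.le
  obtain ⟨u₂, rfl⟩ := hvs
  have hu2ne : u₂ ≠ [] := by
    rintro rfl
    simp at hlen
  obtain ⟨p, hp⟩ := hs
  have hpu : u = p ++ u₂ := by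
    apply List.append_cancel_right (bs := v)
    rw [← hp]; simp
  have hpne : p ≠ [] := by
    rintro rfl
    exact hne (by rw [hpu]; simp)
  have hu2u : u₂ ≠ u := by
    intro h
    rw [h] at hpu
    exact hpne (List.self_eq_append_left.1 hpu)
  have hu2suf : u₂ <:+ u := ⟨p, hpu.symm⟩
  -- the lex-maximal nonempty proper suffix m of u
  classical
  set L := u.tails.filter (fun t => t ≠ [] ∧ t ≠ u) with hL
  have hmemL : ∀ t : List X, t ∈ L ↔ (t <:+ u ∧ t ≠ [] ∧ t ≠ u) := by
    intro t
    simp [hL, List.mem_filter, List.mem_tails]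
  have hLne : L ≠ [] :=
    List.ne_nil_of_mem ((hmemL u₂).2 ⟨hu2suf, hu2ne, hu2u⟩)
  obtain ⟨m, hmL, hmax'⟩ := UL_exists_max L hLne
  obtain ⟨hmsuf, hmne, hmnu⟩ := (hmemL m).1 hmL
  have hmax : ∀ t : List X, t <:+ u → t ≠ [] → t ≠ u → t = m ∨ LexLt t m :=
    fun t h1 h2 h3 => hmax' t ((hmemL t).2 ⟨h1, h2, h3⟩)
  have hLm : IsLyndon m := UL_max_lyndon hmsuf hmne hmnu hmax
  have hmU : m ∈ U := hclosed u hu m hLm hmsuf.isInfix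
  -- m < u
  obtain ⟨w, hw⟩ := hmsuf
  have hwne : w ≠ [] := by rintro rfl; exact hmnu (by simpa using hw)
  have hmu : LexLt m u := by
    rcases UL_suffix hLu hw.symm hwne hmne with h | hpre
    · exact h
    · exact absurd (UL_unbordered hLu hmne hmnu ⟨w, hw⟩ hpre) (by simp)
  have hnotvm : ¬ LexLt v m := fun h => hbet ⟨m, hmU, h, hmu⟩
  -- v < s
  have h1 : LexLt v (u₂ ++ v) := by
    have hvnes : v ≠ u₂ ++ v := by
      intro h
      have := congrArg List.length h
      simp at this
      exact hu2ne this
    rcases UL_suffix hLs rfl hu2ne hLv.1 with h | hpre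
    · exact h
    · exact absurd (UL_unbordered hLs hLv.1 hvnes (List.suffix_append u₂ v) hpre) (by simp)
  -- s < u₂
  have h2 : LexLt (u₂ ++ v) u₂ := by
    refine Or.inr ⟨List.prefix_append u₂ v, ?_⟩
    intro h
    have := congrArg List.length h
    simp at this
    exact hLv.1 this
  -- chain v < s < u₂ ≤ m, contradicting ¬ v < m
  have h5 : LexLt v u₂ := UL_trans h1 h2
  rcases hmax u₂ hu2suf hu2ne hu2u with rfl | h3
  · exact hnotvm h5
  · exact hnotvm (UL_trans h5 h3)
end
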